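/- arXiv:1810.12530 — 7 statements merged into one kernel-verified Lean document; each statement's English description precedes it below -/
import Mathlib

section
/- Let h be the bounded operator on ℓ²(ℤ,ℂ) defined by (hψ)(n) = −(1/2)(ψ(n−1)+ψ(n+1)). Then the spectrum of h equals the interval [−1,1] (viewed inside ℂ). -/
open scoped InnerProductSpace

noncomputable section

namespace Stmt1Aux

abbrev H := lp (fun _ : ℤ => ℂ) 2

lemma htwo : (0:ℝ) < (2 : ENNReal).toReal := by norm_num

lemma mem_shift (k : ℤ) (ψ : H) : Memℓp (fun n => ψ (n + k)) 2 := by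
  rw [memℓp_gen_iff htwo]
  exact ((Equiv.addRight k).summable_iff
    (f := fun i => ‖ψ i‖ ^ (2:ENNReal).toReal)).2 ((lp.memℓp ψ).summable htwo)

def shift (k : ℤ) : H ≃ₗᵢ[ℂ] H where
  toFun ψ := ⟨fun n => ψ (n + k), mem_shift k ψ⟩
  invFun ψ := ⟨fun n => ψ (n - k), by simp only [sub_eq_add_neg]; exact mem_shift (-k) ψ⟩
  left_inv ψ := by apply lp.ext; funext n; simp
  right_inv ψ := by apply lp.ext; funext n; simp
  map_add' ψ φ := by apply lp.ext; funext n; simp [lp.coeFn_add]; rfl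
  map_smul' c ψ := by apply lp.ext; funext n; simp [lp.coeFn_smul]
  norm_map' ψ := by
    rw [lp.norm_eq_tsum_rpow htwo, lp.norm_eq_tsum_rpow htwo]
    congr 1
    exact (Equiv.addRight k).tsum_eq (fun i => ‖ψ i‖ ^ (2:ENNReal).toReal)

@[simp] lemma shift_apply (k : ℤ) (ψ : H) (n : ℤ) : shift k ψ n = ψ (n + k) := rfl

lemma shift_shift (k : ℤ) (φ : H) : shift k (shift (-k) φ) = φ := by
  apply lp.ext; funext n; simp

lemma inner_shift (k : ℤ) (ψ φ : H) :
    ⟪shift k ψ, φ⟫_ℂ = ⟪ψ, shift (-k) φ⟫_ℂ := by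
  conv_lhs => rw [← shift_shift k φ]
  exact (shift k).inner_map_map ψ (shift (-k) φ)

variable (h : H →L[ℂ] H)
  (hh : ∀ (ψ : H) (n : ℤ), h ψ n = -(1/2 : ℂ) * (ψ (n - 1) + ψ (n + 1)))

include hh in
lemma h_eq (ψ : H) : h ψ = (-(1/2 : ℂ)) • (shift (-1) ψ + shift 1 ψ) := by
  apply lp.ext; funext n
  rw [lp.coeFn_smul, Pi.smul_apply, lp.coeFn_add, Pi.add_apply, hh]
  simp [sub_eq_add_neg, smul_eq_mul]

include hh in
lemma norm_h_le : ‖h‖ ≤ 1 := by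
  refine h.opNorm_le_bound zero_le_one fun ψ => ?_
  rw [h_eq h hh]
  calc ‖(-(1/2 : ℂ)) • (shift (-1) ψ + shift 1 ψ)‖
      = (1/2) * ‖shift (-1) ψ + shift 1 ψ‖ := by
        rw [norm_smul]; norm_num
    _ ≤ (1/2) * (‖shift (-1) ψ‖ + ‖shift 1 ψ‖) := by
        gcongr; exact norm_add_le _ _
    _ = 1 * ‖ψ‖ := by rw [(shift (-1)).norm_map, (shift 1).norm_map]; ring

include hh in
lemma h_sa : IsSelfAdjoint h := by
  rw [ContinuousLinearMap.isSelfAdjoint_iff_isSymmetric]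
  intro ψ φ
  show ⟪h ψ, φ⟫_ℂ = ⟪ψ, h φ⟫_ℂ
  rw [h_eq h hh ψ, h_eq h hh φ, inner_smul_left, inner_smul_right,
    inner_add_left, inner_add_right, inner_shift, inner_shift]
  simp [Complex.conj_ofNat]; ring

instance : Nontrivial H := by
  refine ⟨lp.single 2 (0:ℤ) (1:ℂ), 0, fun hc => ?_⟩
  have h1 := congrArg (fun f : H => f 0) hc
  simp [lp.single_apply_self] at h1

include hh in
lemma spec_sub : spectrum ℂ h ⊆ Complex.ofReal '' Set.Icc (-1:ℝ) 1 := by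
  intro z hz
  have hre := (h_sa h hh).mem_spectrum_eq_re hz
  have hnorm : ‖z‖ ≤ 1 := by
    have h1 := spectrum.subset_closedBall_norm h hz
    rw [Metric.mem_closedBall, dist_zero_right] at h1
    exact h1.trans (norm_h_le h hh)
  rw [hre] at hnorm ⊢
  rw [Complex.norm_real] at hnorm
  exact ⟨z.re, abs_le.mp hnorm, rfl⟩

def f (θ : ℝ) (n : ℤ) : ℂ := Complex.exp ((θ * n : ℝ) * Complex.I)

lemma f_norm (θ : ℝ) (n : ℤ) : ‖f θ n‖ = 1 := by
  simpa [f] using Complex.norm_exp_ofReal_mul_I (θ * n)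

lemma f_id (θ : ℝ) (n : ℤ) :
    f θ (n-1) + f θ (n+1) = 2 * (Real.cos θ : ℂ) * f θ n := by
  have e1 : ((θ * ↑(n-1) : ℝ) : ℂ) * Complex.I
      = (θ*n:ℝ)*Complex.I + ((-θ:ℝ):ℂ)*Complex.I := by push_cast; ring
  have e2 : ((θ * ↑(n+1) : ℝ) : ℂ) * Complex.I
      = (θ*n:ℝ)*Complex.I + ((θ:ℝ):ℂ)*Complex.I := by push_cast; ring
  rw [f, f, f, e1, e2, Complex.exp_add, Complex.exp_add]
  simp only [Complex.exp_mul_I, Complex.ofReal_cos, Complex.ofReal_neg,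
    Complex.cos_neg, Complex.sin_neg]
  ring_nf

lemma eq_sum_single (g : H) (t : Finset ℤ) (hg : ∀ n ∉ t, g n = 0) :
    g = ∑ i ∈ t, lp.single 2 i (g i) := by
  apply lp.ext; funext n
  rw [lp.coeFn_sum]
  simp only [Finset.sum_apply, lp.single_apply, Finset.sum_dite_eq]
  by_cases hn : n ∈ t
  · simp [hn]
  · simp [hn, hg n hn]

lemma norm_sq_of_single (g : H) (t : Finset ℤ) (hg : ∀ n ∉ t, g n = 0) :
    ‖g‖^2 = ∑ i ∈ t, ‖g i‖^2 := by
  have h1 := lp.norm_sum_single htwo (fun i => g i) t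
  rw [← eq_sum_single g t hg] at h1
  have h2 : ((2:ENNReal).toReal) = ((2:ℕ):ℝ) := by norm_num
  rw [h2] at h1
  simpa [Real.rpow_natCast] using h1

def psi (θ : ℝ) (K : ℤ) : H := ∑ i ∈ Finset.Icc (-K) K, lp.single 2 i (f θ i)

lemma psi_apply (θ : ℝ) (K : ℤ) (n : ℤ) :
    psi θ K n = if -K ≤ n ∧ n ≤ K then f θ n else 0 := by
  rw [psi, lp.coeFn_sum]
  simp only [Finset.sum_apply, lp.single_apply, Finset.sum_dite_eq, Finset.mem_Icc]
  simp [Pi.single_apply, Finset.mem_Icc]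

lemma psi_norm (θ : ℝ) (K : ℤ) (hK : 0 ≤ K) : ‖psi θ K‖^2 = 2*(K:ℝ) + 1 := by
  have h1 := lp.norm_sum_single htwo (f θ) (Finset.Icc (-K) K)
  rw [show ((2:ENNReal).toReal) = ((2:ℕ):ℝ) by norm_num] at h1
  simp only [Real.rpow_natCast, f_norm, one_pow] at h1
  rw [psi, h1, Finset.sum_const, Int.card_Icc,
    show (K + 1 - -K).toNat = (2 * K + 1).toNat by omega]
  have h2 : ((2*K+1).toNat : ℝ) = ((2*K+1 : ℤ) : ℝ) := by
    exact_mod_cast Int.toNat_of_nonneg (by omega)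
  rw [nsmul_eq_mul, h2]
  push_cast
  ring

set_option maxHeartbeats 1000000 in
include hh in
lemma sub_spec : Complex.ofReal '' Set.Icc (-1:ℝ) 1 ⊆ spectrum ℂ h := by
  rintro - ⟨x, hx, rfl⟩
  obtain ⟨hx1, hx2⟩ := hx
  by_contra hns
  rw [spectrum.notMem_iff] at hns
  obtain ⟨u, hu⟩ := hns
  set C := ‖((↑u⁻¹ : H →L[ℂ] H))‖ with hCdef
  have key : ∀ ψ : H, ‖ψ‖ ≤ C * ‖(algebraMap ℂ (H →L[ℂ] H) x - h) ψ‖ := by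
    intro ψ
    have e : (↑u⁻¹ : H →L[ℂ] H) ((algebraMap ℂ (H →L[ℂ] H) x - h) ψ) = ψ := by
      rw [← hu, ← ContinuousLinearMap.mul_apply, u.inv_mul,
        ContinuousLinearMap.one_apply]
    conv_lhs => rw [← e]
    exact (↑u⁻¹ : H →L[ℂ] H).le_opNorm _
  set θ := Real.arccos (-x) with hθdef
  have hcos : Real.cos θ = -x := Real.cos_arccos (by linarith) (by linarith)
  have hcosC : ((Real.cos θ : ℝ) : ℂ) = -(x:ℂ) := by rw [hcos]; push_cast; ring
  obtain ⟨N, hN⟩ := exists_nat_gt (C^2)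
  set K : ℤ := (N:ℤ) + 1 with hKdef
  have hK1 : (1:ℤ) ≤ K := by omega
  set ψ : H := psi θ K with hψdef
  have ψ_apply : ∀ n : ℤ, ψ n = if -K ≤ n ∧ n ≤ K then f θ n else 0 :=
    fun n => psi_apply θ K n
  have ψ_norm : ‖ψ‖^2 = 2*(K:ℝ) + 1 := psi_norm θ K (by omega)
  set g : H := (algebraMap ℂ (H →L[ℂ] H) x - h) ψ with hgdef
  have g_apply : ∀ n : ℤ, g n = (x:ℂ) * ψ n + (1/2 : ℂ) * (ψ (n-1) + ψ (n+1)) := by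
    intro n
    rw [hgdef, ContinuousLinearMap.sub_apply, lp.coeFn_sub, Pi.sub_apply,
      Algebra.algebraMap_eq_smul_one, ContinuousLinearMap.smul_apply,
      ContinuousLinearMap.one_apply, lp.coeFn_smul, Pi.smul_apply, hh]
    simp only [smul_eq_mul]
    ring
  set t : Finset ℤ := {-K-1, -K, K, K+1} with htdef
  have g_zero : ∀ n ∉ t, g n = 0 := by
    intro n hn
    simp only [htdef, Finset.mem_insert, Finset.mem_singleton] at hn
    push_neg at hn
    by_cases hin : -K + 1 ≤ n ∧ n ≤ K - 1
    · have e0 : ψ n = f θ n := by rw [ψ_apply, if_pos]; omega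
      have e1 : ψ (n-1) = f θ (n-1) := by rw [ψ_apply, if_pos]; omega
      have e2 : ψ (n+1) = f θ (n+1) := by rw [ψ_apply, if_pos]; omega
      have hid := f_id θ n
      rw [hcosC] at hid
      rw [g_apply, e0, e1, e2]
      linear_combination (1/2 : ℂ) * hid
    · have e0 : ψ n = 0 := by rw [ψ_apply, if_neg]; omega
      have e1 : ψ (n-1) = 0 := by rw [ψ_apply, if_neg]; omega
      have e2 : ψ (n+1) = 0 := by rw [ψ_apply, if_neg]; omega
      rw [g_apply, e0, e1, e2]
      ring
  have g_bound : ∀ n ∈ t, ‖g n‖ ≤ 1/2 := by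
    have hb : ∀ m : ℤ, ‖(1/2 : ℂ) * f θ m‖ = 1/2 := by
      intro m; rw [norm_mul, f_norm]; norm_num
    intro n hn
    simp only [htdef, Finset.mem_insert, Finset.mem_singleton] at hn
    rcases hn with hn | hn | hn | hn
    · have e0 : ψ n = 0 := by rw [ψ_apply, if_neg]; omega
      have e1 : ψ (n-1) = 0 := by rw [ψ_apply, if_neg]; omega
      have e2 : ψ (n+1) = f θ (n+1) := by rw [ψ_apply, if_pos]; omega
      have : g n = (1/2:ℂ) * f θ (n+1) := by rw [g_apply, e0, e1, e2]; ring
      rw [this, hb]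
    · have e0 : ψ n = f θ n := by rw [ψ_apply, if_pos]; omega
      have e1 : ψ (n-1) = 0 := by rw [ψ_apply, if_neg]; omega
      have e2 : ψ (n+1) = f θ (n+1) := by rw [ψ_apply, if_pos]; omega
      have hid := f_id θ n
      rw [hcosC] at hid
      have hg : g n = -((1/2:ℂ) * f θ (n-1)) := by
        rw [g_apply, e0, e1, e2]
        linear_combination (1/2 : ℂ) * hid
      rw [hg, norm_neg, hb]
    · have e0 : ψ n = f θ n := by rw [ψ_apply, if_pos]; omega
      have e1 : ψ (n-1) = f θ (n-1) := by rw [ψ_apply, if_pos]; omega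
      have e2 : ψ (n+1) = 0 := by rw [ψ_apply, if_neg]; omega
      have hid := f_id θ n
      rw [hcosC] at hid
      have hg : g n = -((1/2:ℂ) * f θ (n+1)) := by
        rw [g_apply, e0, e1, e2]
        linear_combination (1/2 : ℂ) * hid
      rw [hg, norm_neg, hb]
    · have e0 : ψ n = 0 := by rw [ψ_apply, if_neg]; omega
      have e1 : ψ (n-1) = f θ (n-1) := by rw [ψ_apply, if_pos]; omega
      have e2 : ψ (n+1) = 0 := by rw [ψ_apply, if_neg]; omega
      have : g n = (1/2:ℂ) * f θ (n-1) := by rw [g_apply, e0, e1, e2]; ring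
      rw [this, hb]
  have g_norm : ‖g‖^2 ≤ 1 := by
    rw [norm_sq_of_single g t g_zero]
    have hcard : t.card ≤ 4 := by
      rw [htdef]
      refine le_trans (Finset.card_insert_le _ _) (Nat.succ_le_succ ?_)
      refine le_trans (Finset.card_insert_le _ _) (Nat.succ_le_succ ?_)
      refine le_trans (Finset.card_insert_le _ _) (Nat.succ_le_succ ?_)
      simp
    calc ∑ i ∈ t, ‖g i‖^2 ≤ ∑ i ∈ t, (1/4 : ℝ) := by
          refine Finset.sum_le_sum fun i hi => ?_
          have := g_bound i hi
          nlinarith [norm_nonneg (g i)]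
      _ = t.card * (1/4 : ℝ) := by rw [Finset.sum_const]; ring
      _ ≤ 4 * (1/4 : ℝ) := by
          have : (t.card : ℝ) ≤ 4 := by exact_mod_cast hcard
          nlinarith
      _ = 1 := by norm_num
  have hkey := key ψ
  rw [← hgdef] at hkey
  have hC0 : 0 ≤ C := norm_nonneg _
  have hg0 : 0 ≤ ‖g‖ := norm_nonneg _
  have hψ0 : 0 ≤ ‖ψ‖ := norm_nonneg _
  have hKN : (K:ℝ) = (N:ℝ) + 1 := by rw [hKdef]; push_cast; ring
  nlinarith [ψ_norm, g_norm, hN, sq_nonneg (C * ‖g‖)]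

include hh in
theorem spec_eq : spectrum ℂ h = Complex.ofReal '' Set.Icc (-1:ℝ) 1 :=
  le_antisymm (spec_sub h hh) (sub_spec h hh)

end Stmt1Aux

end

/-- The spectrum of the one-particle Hamiltonian
`(hψ)(n) = -(1/2)(ψ(n-1)+ψ(n+1))` on `ℓ²(ℤ,ℂ)` equals the interval `[-1,1] ⊆ ℂ`. -/
theorem stmt1
    (h : lp (fun _ : ℤ => ℂ) 2 →L[ℂ] lp (fun _ : ℤ => ℂ) 2)
    (hh : ∀ (ψ : lp (fun _ : ℤ => ℂ) 2) (n : ℤ),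
      h ψ n = -(1/2 : ℂ) * (ψ (n - 1) + ψ (n + 1))) :
    spectrum ℂ h = Complex.ofReal '' Set.Icc (-1 : ℝ) 1 :=
  Stmt1Aux.spec_eq h hh
end

section
/- Let h_D be the bounded operator on ℓ²(ℕ,ℂ) defined by (h_Dψ)(0) = −(1/2)ψ(1) and (h_Dψ)(n) = −(1/2)(ψ(n−1)+ψ(n+1)) for n ≥ 1. Then for all f, g ∈ ℓ²(ℕ,ℂ), the inner product ⟨f, exp(it h_D) g⟩ tends to 0 as |t| → ∞. -/
set_option maxHeartbeats 1000000

open Filter MeasureTheory Real NormedSpace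

noncomputable section

namespace Stmt7Aux

lemma integral_cos_int (k : ℤ) (hk : k ≠ 0) :
    ∫ θ in (0:ℝ)..π, Real.cos (k * θ) = 0 := by
  have hc : (k : ℝ) ≠ 0 := Int.cast_ne_zero.mpr hk
  rw [intervalIntegral.integral_comp_mul_left Real.cos hc]
  simp [Real.sin_int_mul_pi]

lemma sine_orth (a b : ℕ) :
    ∫ θ in (0:ℝ)..π, Real.sin (((a:ℝ)+1)*θ) * Real.sin (((b:ℝ)+1)*θ)
      = if a = b then π/2 else 0 := by
  have key : ∀ θ : ℝ, Real.sin (((a:ℝ)+1)*θ) * Real.sin (((b:ℝ)+1)*θ)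
      = (Real.cos ((((a:ℝ)-b))*θ) - Real.cos ((((a:ℝ)+b+2))*θ))/2 := by
    intro θ
    have h := Real.cos_sub_cos ((((a:ℝ)-b))*θ) ((((a:ℝ)+b+2))*θ)
    rw [show (((a:ℝ)-b)*θ + ((a:ℝ)+b+2)*θ)/2 = ((a:ℝ)+1)*θ by ring,
        show (((a:ℝ)-b)*θ - ((a:ℝ)+b+2)*θ)/2 = -(((b:ℝ)+1)*θ) by ring,
        Real.sin_neg] at h
    linarith [h]
  rw [intervalIntegral.integral_congr (fun θ _ => key θ), intervalIntegral.integral_div,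
    intervalIntegral.integral_sub (Continuous.intervalIntegrable (by fun_prop) _ _)
      (Continuous.intervalIntegrable (by fun_prop) _ _)]
  have h2 : ∫ θ in (0:ℝ)..π, Real.cos (((a:ℝ)+b+2)*θ) = 0 := by
    have := integral_cos_int ((a:ℤ)+b+2) (by positivity)
    rw [show (((a:ℤ)+b+2 : ℤ) : ℝ) = ((a:ℝ)+b+2) by push_cast; ring] at this
    exact this
  rcases eq_or_ne a b with rfl | hab
  · simp only [if_pos rfl, h2]
    rw [show ((a:ℝ) - a) = 0 by ring]
    simp [Real.cos_zero]
  · have h1 : ∫ θ in (0:ℝ)..π, Real.cos (((a:ℝ)-b)*θ) = 0 := by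
      have := integral_cos_int ((a:ℤ)-b) (by
        intro h; apply hab; exact_mod_cast sub_eq_zero.mp h)
      rw [show (((a:ℤ)-b : ℤ) : ℝ) = ((a:ℝ)-b) by push_cast; ring] at this
      exact this
    simp [if_neg hab, h1, h2]

def cc (n k j : ℕ) : ℝ :=
  (2/π) * ∫ θ in (0:ℝ)..π, Real.sin (((j:ℝ)+1)*θ) * Real.sin (((n:ℝ)+1)*θ) * (-Real.cos θ)^k

lemma cc_succ0 (n k : ℕ) : cc n (k+1) 0 = -(1/2) * cc n k 1 := by
  have key : ∀ θ : ℝ,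
      Real.sin ((((0:ℕ):ℝ)+1) * θ) * Real.sin (((n:ℝ)+1)*θ) * (-Real.cos θ)^(k+1)
      = -(1/2) * (Real.sin ((((1:ℕ):ℝ)+1) * θ) * Real.sin (((n:ℝ)+1)*θ) * (-Real.cos θ)^k) := by
    intro θ
    have h := Real.sin_two_mul θ
    rw [pow_succ]
    push_cast
    rw [show ((1:ℝ)+1)*θ = 2*θ by ring, show ((0:ℝ)+1)*θ = θ by ring]
    linear_combination (Real.sin (((n:ℝ)+1)*θ) * (-Real.cos θ)^k / 2) * h
  rw [cc, intervalIntegral.integral_congr (fun θ _ => key θ),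
    intervalIntegral.integral_const_mul, cc]
  ring

lemma cc_succ (n k i : ℕ) : cc n (k+1) (i+1) = -(1/2) * (cc n k i + cc n k (i+2)) := by
  have key : ∀ θ : ℝ,
      Real.sin ((((i+1:ℕ):ℝ)+1) * θ) * Real.sin (((n:ℝ)+1)*θ) * (-Real.cos θ)^(k+1)
      = -(1/2) * (Real.sin ((((i:ℕ):ℝ)+1) * θ) * Real.sin (((n:ℝ)+1)*θ) * (-Real.cos θ)^k
          + Real.sin ((((i+2:ℕ):ℝ)+1) * θ) * Real.sin (((n:ℝ)+1)*θ) * (-Real.cos θ)^k) := by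
    intro θ
    have h : Real.sin (((i:ℝ)+1)*θ) + Real.sin (((i:ℝ)+3)*θ)
        = 2 * Real.sin (((i:ℝ)+2)*θ) * Real.cos θ := by
      rw [show ((i:ℝ)+1)*θ = ((i:ℝ)+2)*θ - θ by ring,
          show ((i:ℝ)+3)*θ = ((i:ℝ)+2)*θ + θ by ring, Real.sin_sub, Real.sin_add]
      ring
    rw [pow_succ]
    push_cast
    rw [show ((i:ℝ)+1+1)*θ = ((i:ℝ)+2)*θ by ring, show ((i:ℝ)+2+1)*θ = ((i:ℝ)+3)*θ by ring]
    linear_combination (Real.sin (((n:ℝ)+1)*θ) * (-Real.cos θ)^k / 2) * h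
  rw [cc, intervalIntegral.integral_congr (fun θ _ => key θ),
    intervalIntegral.integral_const_mul,
    intervalIntegral.integral_add (Continuous.intervalIntegrable (by fun_prop) _ _)
      (Continuous.intervalIntegrable (by fun_prop) _ _), cc, cc]
  ring

lemma cc_zero (n j : ℕ) : cc n 0 j = if j = n then 1 else 0 := by
  have key : ∀ θ : ℝ, Real.sin (((j:ℝ)+1)*θ) * Real.sin (((n:ℝ)+1)*θ) * (-Real.cos θ)^0
      = Real.sin (((j:ℝ)+1)*θ) * Real.sin (((n:ℝ)+1)*θ) := by intro θ; ring
  rw [cc, intervalIntegral.integral_congr (fun θ _ => key θ), sine_orth]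
  split_ifs
  · field_simp
  · simp

abbrev HS := lp (fun _ : ℕ => ℂ) 2

def ee (n : ℕ) : HS := lp.single 2 n 1

lemma coord (hD : HS →L[ℂ] HS)
    (hhD0 : ∀ ψ : HS, hD ψ 0 = -(1/2 : ℂ) * ψ 1)
    (hhD : ∀ (ψ : HS) (n : ℕ), 1 ≤ n →
      hD ψ n = -(1/2 : ℂ) * (ψ (n - 1) + ψ (n + 1))) (n : ℕ) :
    ∀ k j : ℕ, ((hD ^ k) (ee n) : ∀ _, ℂ) j = ((cc n k j : ℝ) : ℂ) := by
  intro k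
  induction k with
  | zero =>
    intro j
    rw [pow_zero, ContinuousLinearMap.one_apply, cc_zero,
      apply_ite (fun x : ℝ => (x : ℂ))]
    simp [ee, lp.single_apply, Pi.single_apply]
  | succ k ih =>
    intro j
    rw [pow_succ', ContinuousLinearMap.mul_apply]
    cases j with
    | zero =>
      rw [hhD0, ih 1, cc_succ0]
      push_cast
      ring
    | succ i =>
      rw [hhD _ (i+1) (Nat.succ_le_succ (Nat.zero_le i))]
      simp only [Nat.add_sub_cancel]
      rw [ih i, ih (i+2), cc_succ]
      push_cast
      ring

lemma matrix_elem (hD : HS →L[ℂ] HS)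
    (hhD0 : ∀ ψ : HS, hD ψ 0 = -(1/2 : ℂ) * ψ 1)
    (hhD : ∀ (ψ : HS) (n : ℕ), 1 ≤ n →
      hD ψ n = -(1/2 : ℂ) * (ψ (n - 1) + ψ (n + 1))) (m n : ℕ) (t : ℝ) :
    (inner ℂ (ee m) ((NormedSpace.exp (((t:ℂ) * Complex.I) • hD)) (ee n)) : ℂ)
      = ∑' k : ℕ, ((k.factorial : ℂ)⁻¹ * ((t:ℂ) * Complex.I)^k) * ((cc n k m : ℝ) : ℂ) := by
  set A := ((t:ℂ) * Complex.I) • hD with hA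
  have hsum : Summable fun k : ℕ => (k.factorial : ℂ)⁻¹ • A ^ k := expSeries_summable' A
  let ev : (HS →L[ℂ] HS) →L[ℂ] HS := ContinuousLinearMap.apply ℂ HS (ee n)
  let L : (HS →L[ℂ] HS) →L[ℂ] ℂ := (innerSL ℂ (ee m)).comp ev
  have h1 : (inner ℂ (ee m) ((NormedSpace.exp A) (ee n)) : ℂ) = L (NormedSpace.exp A) := rfl
  rw [h1, exp_eq_tsum (𝕂 := ℂ), L.map_tsum hsum]
  congr 1
  funext k
  have h2 : L ((k.factorial : ℂ)⁻¹ • A ^ k) = (k.factorial : ℂ)⁻¹ * (inner ℂ (ee m) ((A ^ k) (ee n)) : ℂ) := by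
    rw [_root_.map_smul, smul_eq_mul]; rfl
  rw [h2, hA, smul_pow, ContinuousLinearMap.smul_apply, inner_smul_right]
  have h3 : (inner ℂ (ee m) ((hD ^ k) (ee n)) : ℂ) = ((cc n k m : ℝ) : ℂ) := by
    rw [ee, lp.inner_single_left, coord hD hhD0 hhD n k m]
    simp
  rw [h3]
  ring

lemma exp_tsum_aux (w : ℂ) : ∑' k : ℕ, (k.factorial : ℂ)⁻¹ * w^k = Complex.exp w := by
  rw [Complex.exp_eq_exp_ℂ, exp_eq_tsum (𝕂 := ℂ)]
  simp [smul_eq_mul]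

lemma tsum_to_integral (m n : ℕ) (t : ℝ) :
    ∑' k : ℕ, ((k.factorial : ℂ)⁻¹ * ((t:ℂ) * Complex.I)^k) * ((cc n k m : ℝ) : ℂ)
      = (((2/π : ℝ)) : ℂ) * ∫ θ in Set.Ioc (0:ℝ) π,
        ((Real.sin (((m:ℝ)+1)*θ) * Real.sin (((n:ℝ)+1)*θ) : ℝ) : ℂ)
          * Complex.exp (((t:ℂ) * Complex.I) * ((-Real.cos θ : ℝ) : ℂ)) := by
  set z : ℂ := (t:ℂ) * Complex.I with hz
  have hznorm : ‖z‖ = |t| := by simp [hz]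
  set G : ℝ → ℝ := fun θ => Real.sin (((m:ℝ)+1)*θ) * Real.sin (((n:ℝ)+1)*θ) with hG
  set F : ℕ → ℝ → ℂ := fun k θ =>
    (k.factorial : ℂ)⁻¹ * z^k * (((G θ * (-Real.cos θ)^k : ℝ)) : ℂ) with hF
  set μ := volume.restrict (Set.Ioc (0:ℝ) π) with hμdef
  have hGbd : ∀ θ, |G θ| ≤ 1 := by
    intro θ
    rw [hG, abs_mul]
    have h1 := Real.abs_sin_le_one (((m:ℝ)+1)*θ)
    have h2 := Real.abs_sin_le_one (((n:ℝ)+1)*θ)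
    nlinarith [abs_nonneg (Real.sin (((m:ℝ)+1)*θ)), abs_nonneg (Real.sin (((n:ℝ)+1)*θ))]
  have hFbd : ∀ k θ, ‖F k θ‖ ≤ |t|^k / k.factorial := by
    intro k θ
    rw [hF]
    simp only [norm_mul, norm_pow, hznorm, Complex.norm_real, norm_inv, Complex.norm_natCast]
    have h2 : |G θ| * ‖-Real.cos θ‖^k ≤ 1 := by
      rw [Real.norm_eq_abs, abs_neg]
      have hpow := pow_le_one₀ (abs_nonneg (Real.cos θ)) (Real.abs_cos_le_one θ) (n := k)
      nlinarith [hGbd θ, abs_nonneg (G θ), pow_nonneg (abs_nonneg (Real.cos θ)) k]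
    rw [div_eq_inv_mul, Real.norm_eq_abs]
    calc (k.factorial:ℝ)⁻¹ * |t|^k * (|G θ| * ‖-Real.cos θ‖^k)
        ≤ (k.factorial:ℝ)⁻¹ * |t|^k * 1 :=
          mul_le_mul_of_nonneg_left h2 (by positivity)
      _ = (k.factorial:ℝ)⁻¹ * |t|^k := by ring
  have hFcont : ∀ k, Continuous (F k) := by
    intro k
    exact continuous_const.mul (Complex.continuous_ofReal.comp (by fun_prop))
  have hInt : ∀ k, Integrable (F k) μ := fun k => (hFcont k).integrableOn_Ioc
  have hμuniv : μ Set.univ = ENNReal.ofReal π := by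
    rw [hμdef, Measure.restrict_apply MeasurableSet.univ, Set.univ_inter, Real.volume_Ioc,
      sub_zero]
  have hSumNorm : Summable fun k => ∫ θ, ‖F k θ‖ ∂μ := by
    refine Summable.of_nonneg_of_le (fun k => integral_nonneg (fun θ => norm_nonneg _))
      (fun k => ?_) ((Real.summable_pow_div_factorial |t|).mul_left π)
    calc ∫ θ, ‖F k θ‖ ∂μ ≤ ∫ _, |t|^k / k.factorial ∂μ :=
          integral_mono (hInt k).norm (integrable_const _) (fun θ => hFbd k θ)
      _ = π * (|t|^k / k.factorial) := by
          rw [MeasureTheory.integral_const, measureReal_def, hμuniv, ENNReal.toReal_ofReal Real.pi_nonneg, smul_eq_mul]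
  have hswap := integral_tsum_of_summable_integral_norm hInt hSumNorm
  have hL : ∀ k : ℕ, ((k.factorial : ℂ)⁻¹ * z^k) * ((cc n k m : ℝ) : ℂ)
      = (((2/π : ℝ)) : ℂ) * ∫ θ, F k θ ∂μ := by
    intro k
    rw [cc]
    push_cast
    rw [← intervalIntegral.integral_ofReal (f := fun θ => G θ * (-Real.cos θ)^k),
      intervalIntegral.integral_of_le Real.pi_pos.le]
    rw [hF, ← hμdef]
    rw [MeasureTheory.integral_const_mul]
    push_cast
    ring
  calc ∑' k : ℕ, ((k.factorial : ℂ)⁻¹ * z^k) * ((cc n k m : ℝ) : ℂ)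
      = ∑' k : ℕ, (((2/π : ℝ)) : ℂ) * ∫ θ, F k θ ∂μ := by
        exact tsum_congr hL
    _ = (((2/π : ℝ)) : ℂ) * ∑' k : ℕ, ∫ θ, F k θ ∂μ := tsum_mul_left
    _ = (((2/π : ℝ)) : ℂ) * ∫ θ, (∑' k : ℕ, F k θ) ∂μ := by rw [hswap]
    _ = (((2/π : ℝ)) : ℂ) * ∫ θ in Set.Ioc (0:ℝ) π,
        ((G θ : ℝ) : ℂ) * Complex.exp (z * ((-Real.cos θ : ℝ) : ℂ)) := by
        congr 1
        apply MeasureTheory.integral_congr_ae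
        filter_upwards with θ
        have : ∀ k : ℕ, F k θ = ((G θ : ℝ) : ℂ) *
            ((k.factorial : ℂ)⁻¹ * (z * ((-Real.cos θ : ℝ) : ℂ))^k) := by
          intro k
          rw [hF]
          push_cast
          ring
        rw [tsum_congr this, tsum_mul_left, exp_tsum_aux]

def q (m n : ℕ) (x : ℝ) : ℝ :=
  ((Polynomial.Chebyshev.U ℝ (m:ℤ)).eval x) * ((Polynomial.Chebyshev.U ℝ (n:ℤ)).eval x)
    * Real.sqrt (1 - x^2)

lemma q_continuous (m n : ℕ) : Continuous (q m n) := by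
  apply Continuous.mul
  exact ((Polynomial.Chebyshev.U ℝ (m:ℤ)).continuous).mul
    ((Polynomial.Chebyshev.U ℝ (n:ℤ)).continuous)
  exact Real.continuous_sqrt.comp (by fun_prop)

lemma cov (m n : ℕ) (t : ℝ) :
    ∫ θ in Set.Ioc (0:ℝ) π,
        ((Real.sin (((m:ℝ)+1)*θ) * Real.sin (((n:ℝ)+1)*θ) : ℝ) : ℂ)
          * Complex.exp (((t:ℂ) * Complex.I) * ((-Real.cos θ : ℝ) : ℂ))
      = ∫ x in (-1:ℝ)..1, ((q m n x : ℝ) : ℂ)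
          * Complex.exp (((t:ℂ) * Complex.I) * ((-x : ℝ) : ℂ)) := by
  rw [← intervalIntegral.integral_of_le Real.pi_pos.le]
  set g : ℝ → ℂ := fun x => -(((q m n x : ℝ) : ℂ)
    * Complex.exp (((t:ℂ) * Complex.I) * ((-x : ℝ) : ℂ))) with hg
  have hgcont : Continuous g := by
    apply Continuous.neg
    apply Continuous.mul
    · exact Complex.continuous_ofReal.comp (q_continuous m n)
    · exact Complex.continuous_exp.comp (by fun_prop)
  have key : ∀ θ ∈ Set.uIcc (0:ℝ) π,
      ((Real.sin (((m:ℝ)+1)*θ) * Real.sin (((n:ℝ)+1)*θ) : ℝ) : ℂ)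
        * Complex.exp (((t:ℂ) * Complex.I) * ((-Real.cos θ : ℝ) : ℂ))
      = (-Real.sin θ) • (g ∘ Real.cos) θ := by
    intro θ hθ
    rw [Set.uIcc_of_le Real.pi_pos.le] at hθ
    have hsin : 0 ≤ Real.sin θ := Real.sin_nonneg_of_nonneg_of_le_pi hθ.1 hθ.2
    have hsq : Real.sqrt (1 - Real.cos θ^2) = Real.sin θ := by
      rw [show 1 - Real.cos θ^2 = Real.sin θ^2 by rw [Real.sin_sq], Real.sqrt_sq hsin]
    have hum : ((Polynomial.Chebyshev.U ℝ (m:ℤ)).eval (Real.cos θ)) * Real.sin θ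
        = Real.sin (((m:ℝ)+1)*θ) := by
      have := Polynomial.Chebyshev.U_real_cos θ (m:ℤ)
      push_cast at this
      exact this
    have hun : ((Polynomial.Chebyshev.U ℝ (n:ℤ)).eval (Real.cos θ)) * Real.sin θ
        = Real.sin (((n:ℝ)+1)*θ) := by
      have := Polynomial.Chebyshev.U_real_cos θ (n:ℤ)
      push_cast at this
      exact this
    have hreal : Real.sin (((m:ℝ)+1)*θ) * Real.sin (((n:ℝ)+1)*θ)
        = -Real.sin θ * -(q m n (Real.cos θ)) := by
      rw [q, hsq, ← hum, ← hun]
      ring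
    rw [Function.comp_apply, hg]
    rw [show (-Real.sin θ) • (-(((q m n (Real.cos θ) : ℝ) : ℂ)
        * Complex.exp (((t:ℂ) * Complex.I) * ((-Real.cos θ : ℝ) : ℂ))))
      = (((-Real.sin θ * -(q m n (Real.cos θ)) : ℝ)) : ℂ)
        * Complex.exp (((t:ℂ) * Complex.I) * ((-Real.cos θ : ℝ) : ℂ)) by
        push_cast
        rw [Complex.real_smul]
        push_cast
        ring]
    rw [← hreal]
  rw [intervalIntegral.integral_congr key,
    intervalIntegral.integral_comp_smul_deriv (fun x _ => Real.hasDerivAt_cos x)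
      (Continuous.continuousOn (by fun_prop)) hgcont,
    Real.cos_zero, Real.cos_pi, intervalIntegral.integral_symm]
  rw [hg]
  simp only [intervalIntegral.integral_neg, neg_neg]

lemma RLpart (m n : ℕ) :
    Tendsto (fun t : ℝ => ∫ x in (-1:ℝ)..1, ((q m n x : ℝ) : ℂ)
        * Complex.exp (((t:ℂ) * Complex.I) * ((-x : ℝ) : ℂ)))
      (cocompact ℝ) (nhds 0) := by
  set qc : ℝ → ℂ := fun x => ((q m n x : ℝ) : ℂ) with hqc
  set Φ : ℝ → ℂ := Set.indicator (Set.Ioc (-1:ℝ) 1) qc with hΦ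
  have hA : ∀ t : ℝ, (∫ x in (-1:ℝ)..1, qc x
      * Complex.exp (((t:ℂ) * Complex.I) * ((-x : ℝ) : ℂ)))
      = ∫ v : ℝ, Real.fourierChar (-(v * (t / (2*π)))) • Φ v := by
    intro t
    set E : ℝ → ℂ := fun x => Complex.exp (((t:ℂ) * Complex.I) * ((-x : ℝ) : ℂ)) with hE
    rw [intervalIntegral.integral_of_le (by norm_num : (-1:ℝ) ≤ 1),
      ← MeasureTheory.integral_indicator measurableSet_Ioc]
    apply MeasureTheory.integral_congr_ae
    filter_upwards with v
    have harg : ((2 * π * -(v * (t / (2*π))) : ℝ) : ℂ) * Complex.I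
        = ((t:ℂ) * Complex.I) * ((-v : ℝ) : ℂ) := by
      have h2π : (π : ℝ) ≠ 0 := Real.pi_ne_zero
      rw [show (2 * π * -(v * (t / (2*π))) : ℝ) = -(v*t) by field_simp]
      push_cast
      ring
    calc (Set.Ioc (-1:ℝ) 1).indicator (fun x => qc x * E x) v
        = (Set.Ioc (-1:ℝ) 1).indicator (fun x => E x * qc x) v := by
          simp only [mul_comm]
      _ = E v * Φ v := Set.indicator_mul_right _ E qc
      _ = Real.fourierChar (-(v * (t / (2*π)))) • Φ v := by
          rw [Circle.smul_def, smul_eq_mul, Real.fourierChar_apply, harg, hE]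
  have hB : Tendsto (fun w : ℝ => ∫ v : ℝ, Real.fourierChar (-(v * w)) • Φ v)
      (cocompact ℝ) (nhds 0) := Real.tendsto_integral_exp_smul_cocompact Φ
  have hτ : Tendsto (fun t : ℝ => t / (2*π)) (cocompact ℝ) (cocompact ℝ) := by
    have h2π : ((2*π)⁻¹ : ℝ) ≠ 0 := by positivity
    have := (Homeomorph.mulRight₀ ((2*π)⁻¹ : ℝ) h2π).isClosedEmbedding.tendsto_cocompact
    simpa [div_eq_mul_inv] using this
  have := hB.comp hτ
  apply Tendsto.congr _ this
  intro t
  rw [Function.comp_apply, ← hA t]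

lemma sq_summable (x : HS) : Summable fun i => ‖(x : ∀ _ : ℕ, ℂ) i‖^2 := by
  have h := lp.memℓp x
  rw [memℓp_gen_iff (by norm_num : 0 < (2 : ENNReal).toReal)] at h
  have h2 : (2 : ENNReal).toReal = (2:ℝ) := by norm_num
  rw [h2] at h
  apply h.congr
  intro i
  rw [← Real.rpow_natCast ‖(x : ∀ _ : ℕ, ℂ) i‖ 2]
  norm_num

lemma summable_shift' {X Y : ℕ → ℂ} (hX : Summable fun i => ‖X i‖^2)
    (hY : Summable fun i => ‖Y i‖^2) (a b : ℕ) :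
    Summable fun i : ℕ => (starRingEnd ℂ) (X (i+a)) * Y (i+b) := by
  have hx : Summable fun i : ℕ => ‖X (i+a)‖^2 := (summable_nat_add_iff (f := fun i => ‖X i‖^2) a).mpr hX
  have hy : Summable fun i : ℕ => ‖Y (i+b)‖^2 := (summable_nat_add_iff (f := fun i => ‖Y i‖^2) b).mpr hY
  apply Summable.of_norm
  apply Summable.of_nonneg_of_le (fun i => norm_nonneg _)
    (fun i => ?_) ((hx.add hy).mul_left (1/2 : ℝ))
  rw [norm_mul, RCLike.norm_conj]
  set u := ‖X (i+a)‖ with hu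
  set v := ‖Y (i+b)‖ with hv
  nlinarith [sq_nonneg (u - v), norm_nonneg (X (i+a)), norm_nonneg (Y (i+b))]

lemma summable_shift (x y : HS) (a b : ℕ) :
    Summable fun i : ℕ => (starRingEnd ℂ) ((x : ∀ _ : ℕ, ℂ) (i+a)) * (y : ∀ _ : ℕ, ℂ) (i+b) :=
  summable_shift' (sq_summable x) (sq_summable y) a b

lemma hD_symm (hD : HS →L[ℂ] HS)
    (hhD0 : ∀ ψ : HS, hD ψ 0 = -(1/2 : ℂ) * ψ 1)
    (hhD : ∀ (ψ : HS) (n : ℕ), 1 ≤ n →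
      hD ψ n = -(1/2 : ℂ) * (ψ (n - 1) + ψ (n + 1))) (x y : HS) :
    (inner ℂ (hD x) y : ℂ) = inner ℂ x (hD y) := by
  set cj := (starRingEnd ℂ)
  set X : ∀ _ : ℕ, ℂ := (x : ∀ _ : ℕ, ℂ)
  set Y : ∀ _ : ℕ, ℂ := (y : ∀ _ : ℕ, ℂ)
  set A := ∑' i : ℕ, cj (X i) * Y (i+1) with hAdef
  set B := ∑' i : ℕ, cj (X (i+1)) * Y i with hBdef
  set A' := ∑' i : ℕ, cj (X (i+1)) * Y (i+2) with hA'def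
  set B' := ∑' i : ℕ, cj (X (i+2)) * Y (i+1) with hB'def
  have hSA : Summable fun i : ℕ => cj (X i) * Y (i+1) := by simpa using summable_shift x y 0 1
  have hSB : Summable fun i : ℕ => cj (X (i+1)) * Y i := by simpa using summable_shift x y 1 0
  have hSA' : Summable fun i : ℕ => cj (X (i+1)) * Y (i+2) := by
    simpa using summable_shift x y 1 2
  have hSB' : Summable fun i : ℕ => cj (X (i+2)) * Y (i+1) := by
    simpa using summable_shift x y 2 1
  have hA : A = cj (X 0) * Y 1 + A' := by
    rw [hAdef, hSA.tsum_eq_zero_add]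
  have hB : B = cj (X 1) * Y 0 + B' := by
    rw [hBdef, hSB.tsum_eq_zero_add]
  have hconj_half : ∀ z : ℂ, cj (-(1/2) * z) = -(1/2) * cj z := by
    intro z
    rw [map_mul, map_neg, map_div₀, map_one, map_ofNat]
  -- LHS
  have hLsum : Summable fun i : ℕ => cj (((hD x : HS) : ∀ _ : ℕ, ℂ) i) * Y i := by
    have := lp.summable_inner (𝕜 := ℂ) (hD x) y
    apply this.congr
    intro i
    simp [RCLike.inner_apply]
    exact mul_comm _ _
  have hL : (inner ℂ (hD x) y : ℂ)
      = cj (((hD x : HS) : ∀ _ : ℕ, ℂ) 0) * Y 0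
        + ∑' i : ℕ, cj (((hD x : HS) : ∀ _ : ℕ, ℂ) (i+1)) * Y (i+1) := by
    rw [lp.inner_eq_tsum]
    simp only [RCLike.inner_apply]
    rw [← hLsum.tsum_eq_zero_add]
    exact tsum_congr (fun i => mul_comm _ _)
  have hL2 : ∑' i : ℕ, cj (((hD x : HS) : ∀ _ : ℕ, ℂ) (i+1)) * Y (i+1)
      = -(1/2) * (A + B') := by
    have hterm : ∀ i : ℕ, cj (((hD x : HS) : ∀ _ : ℕ, ℂ) (i+1)) * Y (i+1)
        = -(1/2) * (cj (X i) * Y (i+1) + cj (X (i+2)) * Y (i+1)) := by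
      intro i
      rw [hhD x (i+1) (Nat.succ_le_succ (Nat.zero_le i))]
      simp only [Nat.add_sub_cancel]
      rw [show cj (-(1/2 : ℂ) * (X i + X (i+2))) = -(1/2) * (cj (X i) + cj (X (i+2))) by
        rw [hconj_half]; rw [map_add]]
      ring
    rw [tsum_congr hterm, tsum_mul_left, hSA.tsum_add hSB', hAdef, hB'def]
  -- RHS
  have hRsum : Summable fun i : ℕ => cj (X i) * ((hD y : HS) : ∀ _ : ℕ, ℂ) i := by
    have := lp.summable_inner (𝕜 := ℂ) x (hD y)
    apply this.congr
    intro i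
    simp [RCLike.inner_apply]
    exact mul_comm _ _
  have hR : (inner ℂ x (hD y) : ℂ)
      = cj (X 0) * ((hD y : HS) : ∀ _ : ℕ, ℂ) 0
        + ∑' i : ℕ, cj (X (i+1)) * ((hD y : HS) : ∀ _ : ℕ, ℂ) (i+1) := by
    rw [lp.inner_eq_tsum]
    simp only [RCLike.inner_apply]
    rw [← hRsum.tsum_eq_zero_add]
    exact tsum_congr (fun i => mul_comm _ _)
  have hR2 : ∑' i : ℕ, cj (X (i+1)) * ((hD y : HS) : ∀ _ : ℕ, ℂ) (i+1)
      = -(1/2) * (B + A') := by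
    have hterm : ∀ i : ℕ, cj (X (i+1)) * ((hD y : HS) : ∀ _ : ℕ, ℂ) (i+1)
        = -(1/2) * (cj (X (i+1)) * Y i + cj (X (i+1)) * Y (i+2)) := by
      intro i
      rw [hhD y (i+1) (Nat.succ_le_succ (Nat.zero_le i))]
      simp only [Nat.add_sub_cancel]
      ring
    rw [tsum_congr hterm, tsum_mul_left, hSB.tsum_add hSA', hBdef, hA'def]
  rw [hL, hL2, hR, hR2, hhD0 x, hhD0 y, hconj_half ((X : ∀ _ : ℕ, ℂ) 1)]
  linear_combination (-(1/2 : ℂ)) * hA + (1/2 : ℂ) * hB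

lemma exp_isometry (hD : HS →L[ℂ] HS)
    (hsym : ∀ x y : HS, (inner ℂ (hD x) y : ℂ) = inner ℂ x (hD y)) (t : ℝ) (g : HS) :
    ‖(NormedSpace.exp (((t:ℂ) * Complex.I) • hD)) g‖ = ‖g‖ := by
  have hsa : star hD = hD := by
    rw [ContinuousLinearMap.star_eq_adjoint]
    exact ((ContinuousLinearMap.eq_adjoint_iff hD hD).mpr hsym).symm
  have hskew : ((t:ℂ) * Complex.I) • hD ∈ skewAdjoint (HS →L[ℂ] HS) := by
    rw [skewAdjoint.mem_iff, star_smul, hsa, Complex.star_def]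
    have : (starRingEnd ℂ) ((t:ℂ) * Complex.I) = -((t:ℂ) * Complex.I) := by
      rw [map_mul, Complex.conj_ofReal, Complex.conj_I]
      ring
    rw [this, neg_smul]
  set u := NormedSpace.exp (((t:ℂ) * Complex.I) • hD) with hu
  let +nondep : NormedAlgebra ℚ (HS →L[ℂ] HS) := .restrictScalars ℚ ℂ (HS →L[ℂ] HS)
  have hunit : u ∈ unitary (HS →L[ℂ] HS) := exp_mem_unitary_of_mem_skewAdjoint hskew
  have h1 : star u * u = 1 := (Unitary.mem_iff.mp hunit).1
  have h2 : (ContinuousLinearMap.adjoint u) (u g) = g := by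
    rw [← ContinuousLinearMap.star_eq_adjoint, ← ContinuousLinearMap.mul_apply, h1,
      ContinuousLinearMap.one_apply]
  have h3 : (inner ℂ (u g) (u g) : ℂ) = inner ℂ g g := by
    rw [← ContinuousLinearMap.adjoint_inner_left, h2]
  have h4 := congrArg (fun z : ℂ => RCLike.re z) h3
  rw [inner_self_eq_norm_sq (𝕜 := ℂ) (u g), inner_self_eq_norm_sq (𝕜 := ℂ) g] at h4
  calc ‖u g‖ = Real.sqrt (‖u g‖^2) := (Real.sqrt_sq (norm_nonneg _)).symm
    _ = Real.sqrt (‖g‖^2) := by rw [h4]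
    _ = ‖g‖ := Real.sqrt_sq (norm_nonneg _)

lemma base_tendsto (hD : HS →L[ℂ] HS)
    (hhD0 : ∀ ψ : HS, hD ψ 0 = -(1/2 : ℂ) * ψ 1)
    (hhD : ∀ (ψ : HS) (n : ℕ), 1 ≤ n →
      hD ψ n = -(1/2 : ℂ) * (ψ (n - 1) + ψ (n + 1))) (m n : ℕ) :
    Tendsto (fun t : ℝ => (inner ℂ (ee m) ((NormedSpace.exp (((t:ℂ) * Complex.I) • hD)) (ee n)) : ℂ))
      (cocompact ℝ) (nhds 0) := by
  have key : ∀ t : ℝ, (inner ℂ (ee m) ((NormedSpace.exp (((t:ℂ) * Complex.I) • hD)) (ee n)) : ℂ)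
      = (((2/π : ℝ)) : ℂ) * ∫ x in (-1:ℝ)..1, ((q m n x : ℝ) : ℂ)
          * Complex.exp (((t:ℂ) * Complex.I) * ((-x : ℝ) : ℂ)) := by
    intro t
    rw [matrix_elem hD hhD0 hhD m n t, tsum_to_integral m n t, cov m n t]
  rw [tendsto_congr key]
  simpa using (RLpart m n).const_mul (((2/π : ℝ)) : ℂ)

end Stmt7Aux

open Stmt7Aux in
/-- For the Dirichlet discrete Laplacian `h_D` on `ℓ²(ℕ,ℂ)`
(`(h_Dψ)(0) = -(1/2)ψ(1)`, `(h_Dψ)(n) = -(1/2)(ψ(n-1)+ψ(n+1))` for `n ≥ 1`), the matrix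
elements `⟨f, e^{ith_D} g⟩` tend to `0` as `|t| → ∞` (the cocompact filter on `ℝ`). -/
theorem stmt7
    (hD : lp (fun _ : ℕ => ℂ) 2 →L[ℂ] lp (fun _ : ℕ => ℂ) 2)
    (hhD0 : ∀ ψ : lp (fun _ : ℕ => ℂ) 2, hD ψ 0 = -(1/2 : ℂ) * ψ 1)
    (hhD : ∀ (ψ : lp (fun _ : ℕ => ℂ) 2) (n : ℕ), 1 ≤ n →
      hD ψ n = -(1/2 : ℂ) * (ψ (n - 1) + ψ (n + 1))) :
    ∀ f g : lp (fun _ : ℕ => ℂ) 2,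
      Tendsto (fun t : ℝ =>
          (inner ℂ f ((NormedSpace.exp (((t : ℂ) * Complex.I) • hD)) g) : ℂ))
        (cocompact ℝ) (nhds 0) := by
  intro f g
  set U : ℝ → (HS →L[ℂ] HS) := fun t => NormedSpace.exp (((t:ℂ) * Complex.I) • hD) with hU
  have hsym := hD_symm hD hhD0 hhD
  have hiso : ∀ (t : ℝ) (v : HS), ‖U t v‖ = ‖v‖ := fun t v => exp_isometry hD hsym t v
  have base := base_tendsto hD hhD0 hhD
  have combo : ∀ (s s' : Finset ℕ) (F G : ℕ → ℂ),
      Tendsto (fun t : ℝ => (inner ℂ (∑ i ∈ s, F i • ee i) (U t (∑ j ∈ s', G j • ee j)) : ℂ))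
        (cocompact ℝ) (nhds 0) := by
    intro s s' F G
    have expand : ∀ t : ℝ, (inner ℂ (∑ i ∈ s, F i • ee i) (U t (∑ j ∈ s', G j • ee j)) : ℂ)
        = ∑ i ∈ s, ∑ j ∈ s',
          ((starRingEnd ℂ) (F i) * G j) * (inner ℂ (ee i) (U t (ee j)) : ℂ) := by
      intro t
      rw [map_sum (U t), sum_inner]
      refine Finset.sum_congr rfl (fun i _ => ?_)
      rw [inner_sum]
      refine Finset.sum_congr rfl (fun j _ => ?_)
      rw [map_smul (U t), inner_smul_left, inner_smul_right]
      ring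
    rw [tendsto_congr expand]
    have h0 : (0 : ℂ) = ∑ i ∈ s, ∑ j ∈ s', ((starRingEnd ℂ) (F i) * G j) * 0 := by simp
    rw [h0]
    refine tendsto_finset_sum s (fun i _ => tendsto_finset_sum s' (fun j _ => ?_))
    simpa using (base i j).const_mul ((starRingEnd ℂ) (F i) * G j)
  rw [NormedAddCommGroup.tendsto_nhds_zero]
  intro ε hε
  set δ := min 1 (ε / (2 * (‖f‖ + ‖g‖ + 2))) with hδ
  have hδpos : 0 < δ := lt_min one_pos (by positivity)
  have hδ1 : δ ≤ 1 := min_le_left _ _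
  have hδ2 : δ ≤ ε / (2 * (‖f‖ + ‖g‖ + 2)) := min_le_right _ _
  have hf2 : (2 : ENNReal) ≠ ⊤ := by norm_num
  obtain ⟨s, hs⟩ := (Metric.tendsto_nhds.mp (lp.hasSum_single hf2 f) δ hδpos).exists
  obtain ⟨s', hs'⟩ := (Metric.tendsto_nhds.mp (lp.hasSum_single hf2 g) δ hδpos).exists
  set f' : HS := ∑ i ∈ s, lp.single 2 i (f i) with hf'
  set g' : HS := ∑ j ∈ s', lp.single 2 j (g j) with hg'
  have hsingle : ∀ (c : ℂ) (i : ℕ), lp.single 2 i c = c • ee i := by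
    intro c i
    rw [ee, ← lp.single_smul]
    congr 1
    simp
  have hf'eq : f' = ∑ i ∈ s, (f i : ℂ) • ee i :=
    Finset.sum_congr rfl (fun i _ => hsingle _ i)
  have hg'eq : g' = ∑ j ∈ s', (g j : ℂ) • ee j :=
    Finset.sum_congr rfl (fun j _ => hsingle _ j)
  have hcombo : Tendsto (fun t : ℝ => (inner ℂ f' (U t g') : ℂ)) (cocompact ℝ) (nhds 0) := by
    rw [hf'eq, hg'eq]
    exact combo s s' _ _
  have hev := NormedAddCommGroup.tendsto_nhds_zero.mp hcombo (ε/2) (by positivity)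
  filter_upwards [hev] with t ht
  have hdf : ‖f - f'‖ < δ := by
    rw [norm_sub_rev, ← dist_eq_norm]
    exact hs
  have hdg : ‖g - g'‖ < δ := by
    rw [norm_sub_rev, ← dist_eq_norm]
    exact hs'
  have hf'norm : ‖f'‖ ≤ ‖f‖ + δ := by
    calc ‖f'‖ = ‖f - (f - f')‖ := by rw [sub_sub_cancel]
      _ ≤ ‖f‖ + ‖f - f'‖ := norm_sub_le _ _
      _ ≤ ‖f‖ + δ := by linarith
  have hsplit : (inner ℂ f (U t g) : ℂ)
      = inner ℂ (f - f') (U t g) + inner ℂ f' (U t (g - g')) + inner ℂ f' (U t g') := by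
    rw [map_sub (U t), inner_sub_left, inner_sub_right]
    ring
  have hb1 : ‖(inner ℂ (f - f') (U t g) : ℂ)‖ ≤ δ * ‖g‖ :=
    (norm_inner_le_norm _ _).trans (by rw [hiso]; exact mul_le_mul_of_nonneg_right hdf.le (norm_nonneg _))
  have hb2 : ‖(inner ℂ f' (U t (g - g')) : ℂ)‖ ≤ (‖f‖ + δ) * δ := by
    refine (norm_inner_le_norm _ _).trans ?_
    rw [hiso]
    exact mul_le_mul hf'norm hdg.le (norm_nonneg _) (by positivity)
  have hsmall : δ * ‖g‖ + (‖f‖ + δ) * δ < ε/2 := by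
    have h1 : δ * ‖g‖ + (‖f‖ + δ) * δ ≤ δ * (‖f‖ + ‖g‖ + 1) := by nlinarith [norm_nonneg f, norm_nonneg g]
    have h2 : δ * (‖f‖ + ‖g‖ + 1) < ε/2 := by
      have h3 : 0 < ‖f‖ + ‖g‖ + 2 := by positivity
      calc δ * (‖f‖ + ‖g‖ + 1) ≤ ε / (2 * (‖f‖ + ‖g‖ + 2)) * (‖f‖ + ‖g‖ + 1) :=
            mul_le_mul_of_nonneg_right hδ2 (by positivity)
        _ < ε/2 := by
            rw [div_mul_eq_mul_div, div_lt_div_iff₀ (by positivity) (by positivity)]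
            nlinarith [norm_nonneg f, norm_nonneg g]
    linarith
  calc ‖(inner ℂ f (U t g) : ℂ)‖
      ≤ ‖(inner ℂ (f - f') (U t g) : ℂ)‖ + ‖(inner ℂ f' (U t (g - g')) : ℂ)‖
        + ‖(inner ℂ f' (U t g') : ℂ)‖ := by
        rw [hsplit]
        exact (norm_add_le _ _).trans (add_le_add_left (norm_add_le _ _) _)
    _ < (δ * ‖g‖ + (‖f‖ + δ) * δ) + ε/2 := by
        have := add_lt_add_of_le_of_lt (add_le_add hb1 hb2) ht
        linarith
    _ < ε := by linarith
end
end

section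
/- Let n ≥ 1, let H be an n×n Hermitian complex matrix, let β > 0 be real, and let U be an n×n unitary matrix. Then Tr(exp(−βH)·U*HU) ≥ Tr(exp(−βH)·H). Equivalently, for the Gibbs density matrix ρ = exp(−βH)/Tr(exp(−βH)), the extracted work Tr(ρH) − Tr(UρU*·H) is ≤ 0. -/
open scoped ComplexOrder
open Matrix

/-- exp of `(-β) • M` for Hermitian `M`, diagonalized. -/
lemma exp_neg_smul_herm {n : ℕ} (β : ℝ) {M : Matrix (Fin n) (Fin n) ℂ} (hM : M.IsHermitian) :
    NormedSpace.exp ((-(β : ℂ)) • M) =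
      (hM.eigenvectorUnitary : Matrix (Fin n) (Fin n) ℂ) *
        Matrix.diagonal (fun i => Complex.exp (-(β : ℂ) * (hM.eigenvalues i : ℂ))) *
        star (hM.eigenvectorUnitary : Matrix (Fin n) (Fin n) ℂ) := by
  set V : Matrix (Fin n) (Fin n) ℂ := (hM.eigenvectorUnitary : Matrix (Fin n) (Fin n) ℂ) with hV
  have hV2 : V * star V = 1 := Matrix.mem_unitaryGroup_iff.mp hM.eigenvectorUnitary.2
  have hVinv : V⁻¹ = star V := Matrix.inv_eq_right_inv hV2
  have hsp : (-(β : ℂ)) • M =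
      V * Matrix.diagonal (fun i => (-(β : ℂ)) * (hM.eigenvalues i : ℂ)) * star V := by
    conv_lhs => rw [hM.spectral_theorem]
    rw [Unitary.conjStarAlgAut_apply]
    rw [← smul_mul_assoc, ← mul_smul_comm, ← Matrix.diagonal_smul]
    congr 2
  rw [hsp, ← hVinv, Matrix.exp_conj V
    (Matrix.diagonal (fun i => (-(β : ℂ)) * (hM.eigenvalues i : ℂ)))
    (⟨⟨V, star V, hV2, (Unitary.mem_iff.mp hM.eigenvectorUnitary.2).1⟩, rfl⟩ : IsUnit V),
    hVinv, Matrix.exp_diagonal]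
  congr 1
  congr 1
  rw [Pi.exp_def]
  ext i
  rw [← Complex.exp_eq_exp_ℂ]

lemma trace_diag_conj {n : ℕ} (C : Matrix (Fin n) (Fin n) ℂ) (d e : Fin n → ℂ) :
    (Matrix.diagonal d * (C * Matrix.diagonal e * star C)).trace
      = ∑ i, ∑ j, d i * e j * (C i j * star (C i j)) := by
  simp only [Matrix.trace, Matrix.diag_apply, Matrix.mul_apply, Matrix.diagonal_apply,
    Matrix.conjTranspose_apply, Matrix.star_eq_conjTranspose]
  rw [Finset.sum_congr rfl]
  intro i _
  simp [Finset.mul_sum, Finset.sum_ite_eq, Matrix.mul_apply, Finset.sum_mul]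
  rw [Finset.sum_congr rfl]
  intro j _
  ring

lemma sum_ineq_aux {n : ℕ} (β : ℝ) (hβ : 0 < β) (lam mu : Fin n → ℝ) (p : Fin n → Fin n → ℝ)
    (hp : ∀ i j, 0 ≤ p i j) (hrow : ∀ i, ∑ j, p i j = 1) (hcol : ∀ j, ∑ i, p i j = 1)
    (hsum : ∑ j, Real.exp (-(β * mu j)) = ∑ i, Real.exp (-(β * lam i))) :
    ∑ i, Real.exp (-(β * lam i)) * lam i ≤
      ∑ i, ∑ j, Real.exp (-(β * lam i)) * mu j * p i j := by
  have key : ∀ i j, p i j * (Real.exp (-(β * lam i)) - Real.exp (-(β * mu j))) ≤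
      β * (Real.exp (-(β * lam i)) * mu j * p i j -
        Real.exp (-(β * lam i)) * lam i * p i j) := by
    intro i j
    have h1 : -(β * (mu j - lam i)) + 1 ≤ Real.exp (-(β * (mu j - lam i))) :=
      Real.add_one_le_exp _
    have h2 : Real.exp (-(β * lam i)) * Real.exp (-(β * (mu j - lam i))) =
        Real.exp (-(β * mu j)) := by
      rw [← Real.exp_add]; ring_nf
    have h3 := mul_le_mul_of_nonneg_left h1 (Real.exp_pos (-(β * lam i))).le
    rw [h2] at h3
    nlinarith [hp i j, Real.exp_pos (-(β * lam i))]
  have hzero : ∑ i, ∑ j, p i j * (Real.exp (-(β * lam i)) - Real.exp (-(β * mu j))) = 0 := by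
    simp_rw [mul_sub, Finset.sum_sub_distrib]
    have e1 : ∑ i, ∑ j, p i j * Real.exp (-(β * lam i)) = ∑ i, Real.exp (-(β * lam i)) := by
      refine Finset.sum_congr rfl fun i _ => ?_
      rw [← Finset.sum_mul, hrow i, one_mul]
    have e2 : ∑ i, ∑ j, p i j * Real.exp (-(β * mu j)) = ∑ j, Real.exp (-(β * mu j)) := by
      rw [Finset.sum_comm]
      refine Finset.sum_congr rfl fun j _ => ?_
      rw [← Finset.sum_mul, hcol j, one_mul]
    rw [e1, e2, hsum, sub_self]
  have hbig : (0:ℝ) ≤ ∑ i, ∑ j, β * (Real.exp (-(β * lam i)) * mu j * p i j -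
      Real.exp (-(β * lam i)) * lam i * p i j) := by
    rw [← hzero]
    exact Finset.sum_le_sum fun i _ => Finset.sum_le_sum fun j _ => key i j
  have hsplit : ∑ i, ∑ j, β * (Real.exp (-(β * lam i)) * mu j * p i j -
      Real.exp (-(β * lam i)) * lam i * p i j) =
      β * ((∑ i, ∑ j, Real.exp (-(β * lam i)) * mu j * p i j) -
        ∑ i, ∑ j, Real.exp (-(β * lam i)) * lam i * p i j) := by
    simp_rw [mul_sub, Finset.sum_sub_distrib, Finset.mul_sum]
  have hS1 : ∑ i, Real.exp (-(β * lam i)) * lam i =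
      ∑ i, ∑ j, Real.exp (-(β * lam i)) * lam i * p i j := by
    refine Finset.sum_congr rfl fun i _ => ?_
    rw [← Finset.mul_sum, hrow i, mul_one]
  rw [hsplit] at hbig
  rw [hS1]
  nlinarith [hbig, hβ]

/-- (Second law for Gibbs states, finite dimension.) For an `n×n` Hermitian
matrix `H`, `β > 0`, and a unitary `U`, one has `Tr(e^{-βH} U*HU) ≥ Tr(e^{-βH} H)`;
equivalently, for the Gibbs state `ρ = e^{-βH}/Tr e^{-βH}`, the extracted work
`Tr(ρH) - Tr(UρU* H)` is `≤ 0`. -/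
theorem stmt11 (n : ℕ) (hn : 1 ≤ n) (H U : Matrix (Fin n) (Fin n) ℂ)
    (hH : H.IsHermitian) (β : ℝ) (hβ : 0 < β)
    (hU : U ∈ Matrix.unitaryGroup (Fin n) ℂ) :
    (NormedSpace.exp ((-(β : ℂ)) • H) * H).trace ≤
        (NormedSpace.exp ((-(β : ℂ)) • H) * (star U * H * U)).trace ∧
      ((((NormedSpace.exp ((-(β : ℂ)) • H)).trace)⁻¹ • NormedSpace.exp ((-(β : ℂ)) • H)
            * H).trace -
          (U * (((NormedSpace.exp ((-(β : ℂ)) • H)).trace)⁻¹ •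
              NormedSpace.exp ((-(β : ℂ)) • H)) * star U * H).trace) ≤ 0 := by
  classical
  have hU1 : star U * U = 1 := (Unitary.mem_iff.mp hU).1
  have hU2 : U * star U = 1 := (Unitary.mem_iff.mp hU).2
  set K : Matrix (Fin n) (Fin n) ℂ := star U * H * U with hKdef
  have hK : K.IsHermitian := by
    rw [hKdef, Matrix.star_eq_conjTranspose]
    exact Matrix.isHermitian_conjTranspose_mul_mul U hH
  set A : Matrix (Fin n) (Fin n) ℂ := NormedSpace.exp ((-(β : ℂ)) • H) with hAdef
  set V : Matrix (Fin n) (Fin n) ℂ := (hH.eigenvectorUnitary : Matrix (Fin n) (Fin n) ℂ) with hVdef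
  set W : Matrix (Fin n) (Fin n) ℂ := (hK.eigenvectorUnitary : Matrix (Fin n) (Fin n) ℂ) with hWdef
  set lam : Fin n → ℝ := hH.eigenvalues with hlam
  set mu : Fin n → ℝ := hK.eigenvalues with hmu
  have hV1 : star V * V = 1 := (Unitary.mem_iff.mp hH.eigenvectorUnitary.2).1
  have hV2 : V * star V = 1 := (Unitary.mem_iff.mp hH.eigenvectorUnitary.2).2
  have hW1 : star W * W = 1 := (Unitary.mem_iff.mp hK.eigenvectorUnitary.2).1
  have hW2 : W * star W = 1 := (Unitary.mem_iff.mp hK.eigenvectorUnitary.2).2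
  set d1 : Fin n → ℂ := fun i => Complex.exp (-(β : ℂ) * (lam i : ℂ)) with hd1
  have hA : A = V * Matrix.diagonal d1 * star V := exp_neg_smul_herm β hH
  have hHsp : H = V * Matrix.diagonal (fun i => (lam i : ℂ)) * star V := hH.spectral_theorem
  have hKsp : K = W * Matrix.diagonal (fun j => (mu j : ℂ)) * star W := hK.spectral_theorem
  set C : Matrix (Fin n) (Fin n) ℂ := star V * W with hCdef
  have hstarC : star C = star W * V := by
    simp only [hCdef, StarMul.star_mul, star_star]
  have hC1 : C * star C = 1 := by
    rw [hCdef, hstarC, mul_assoc, ← mul_assoc W, hW2, one_mul, hV1]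
  have hC2 : star C * C = 1 := by
    rw [hCdef, hstarC, mul_assoc, ← mul_assoc V, hV2, one_mul, hW1]
  set p : Fin n → Fin n → ℝ := fun i j => Complex.normSq (C i j) with hpdef
  have hCp : ∀ i j, C i j * star (C i j) = ((p i j : ℝ) : ℂ) := fun i j => Complex.mul_conj _
  have hp : ∀ i j, 0 ≤ p i j := fun i j => Complex.normSq_nonneg _
  have hrow : ∀ i, ∑ j, p i j = 1 := by
    intro i
    have h := congrArg (fun M : Matrix (Fin n) (Fin n) ℂ => M i i) hC1
    simp only [Matrix.mul_apply, Matrix.one_apply_eq] at h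
    have h' : ∑ j, ((p i j : ℝ) : ℂ) = 1 := by
      rw [← h]
      refine Finset.sum_congr rfl fun j _ => ?_
      rw [← hCp i j, Matrix.star_eq_conjTranspose, Matrix.conjTranspose_apply]
    exact_mod_cast h'
  have hcol : ∀ j, ∑ i, p i j = 1 := by
    intro j
    have h := congrArg (fun M : Matrix (Fin n) (Fin n) ℂ => M j j) hC2
    simp only [Matrix.mul_apply, Matrix.one_apply_eq] at h
    have h' : ∑ i, ((p i j : ℝ) : ℂ) = 1 := by
      rw [← h]
      refine Finset.sum_congr rfl fun i _ => ?_
      rw [← hCp i j, Matrix.star_eq_conjTranspose, Matrix.conjTranspose_apply]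
      ring
    exact_mod_cast h'
  -- trace of A * H
  have tAH : (A * H).trace = ((∑ i, Real.exp (-(β * lam i)) * lam i : ℝ) : ℂ) := by
    rw [hA, hHsp,
      show V * Matrix.diagonal d1 * star V * (V * Matrix.diagonal (fun i => (lam i : ℂ)) * star V)
        = V * (Matrix.diagonal d1 * (star V * V) * Matrix.diagonal (fun i => (lam i : ℂ)) *
          star V) from by simp only [Matrix.mul_assoc],
      hV1, Matrix.trace_mul_comm]
    rw [show Matrix.diagonal d1 * 1 * Matrix.diagonal (fun i => (lam i : ℂ)) * star V * V
        = Matrix.diagonal d1 * Matrix.diagonal (fun i => (lam i : ℂ)) * (star V * V) from by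
        simp only [Matrix.mul_assoc, Matrix.mul_one, Matrix.one_mul]]
    rw [hV1, Matrix.mul_one, Matrix.diagonal_mul_diagonal, Matrix.trace_diagonal]
    push_cast
    refine Finset.sum_congr rfl fun i _ => ?_
    simp [hd1, neg_mul]
  -- trace of A * K
  have tAK : (A * K).trace =
      ((∑ i, ∑ j, Real.exp (-(β * lam i)) * mu j * p i j : ℝ) : ℂ) := by
    have step : (A * K).trace =
        (Matrix.diagonal d1 * (C * Matrix.diagonal (fun j => (mu j : ℂ)) * star C)).trace := by
      rw [hA, hKsp,
        show V * Matrix.diagonal d1 * star V * (W * Matrix.diagonal (fun j => (mu j : ℂ)) * star W)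
          = V * (Matrix.diagonal d1 * star V * (W * Matrix.diagonal (fun j => (mu j : ℂ)) * star W))
          from by simp only [Matrix.mul_assoc],
        Matrix.trace_mul_comm]
      congr 1
      rw [hstarC, hCdef]
      simp only [Matrix.mul_assoc]
    rw [step, trace_diag_conj]
    have hterm : ∀ i j, d1 i * ((mu j : ℝ) : ℂ) * (C i j * star (C i j)) =
        ((Real.exp (-(β * lam i)) * mu j * p i j : ℝ) : ℂ) := by
      intro i j
      rw [hCp i j]
      push_cast
      simp [hd1, neg_mul]
    rw [Finset.sum_congr rfl fun i _ => Finset.sum_congr rfl fun j _ => hterm i j]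
    norm_cast
  -- trace of A
  have tA : A.trace = ((∑ i, Real.exp (-(β * lam i)) : ℝ) : ℂ) := by
    rw [hA, show V * Matrix.diagonal d1 * star V = V * (Matrix.diagonal d1 * star V) from by
      simp only [Matrix.mul_assoc], Matrix.trace_mul_comm,
      show Matrix.diagonal d1 * star V * V = Matrix.diagonal d1 * (star V * V) from by
        simp only [Matrix.mul_assoc], hV1, Matrix.mul_one, Matrix.trace_diagonal]
    push_cast
    refine Finset.sum_congr rfl fun i _ => ?_
    simp [hd1, neg_mul]
  -- equality of exponential sums (Tr exp(-βK) = Tr exp(-βH))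
  have hsum : ∑ j, Real.exp (-(β * mu j)) = ∑ i, Real.exp (-(β * lam i)) := by
    have hKexp : NormedSpace.exp ((-(β : ℂ)) • K) =
        W * Matrix.diagonal (fun j => Complex.exp (-(β : ℂ) * (mu j : ℂ))) * star W :=
      exp_neg_smul_herm β hK
    have hUinv : U⁻¹ = star U := Matrix.inv_eq_right_inv hU2
    have hconj : NormedSpace.exp ((-(β : ℂ)) • K) = star U * A * U := by
      rw [hAdef, show (-(β : ℂ)) • K = star U * ((-(β : ℂ)) • H) * U from by
        rw [hKdef, ← smul_mul_assoc, ← mul_smul_comm], ← hUinv,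
        Matrix.exp_conj' U ((-(β : ℂ)) • H)
          (⟨⟨U, star U, hU2, hU1⟩, rfl⟩ : IsUnit U), hUinv]
    have t1 : (NormedSpace.exp ((-(β : ℂ)) • K)).trace =
        ((∑ j, Real.exp (-(β * mu j)) : ℝ) : ℂ) := by
      rw [hKexp, show W * Matrix.diagonal (fun j => Complex.exp (-(β : ℂ) * (mu j : ℂ))) * star W
          = W * (Matrix.diagonal (fun j => Complex.exp (-(β : ℂ) * (mu j : ℂ))) * star W) from by
          simp only [Matrix.mul_assoc], Matrix.trace_mul_comm,
        show Matrix.diagonal (fun j => Complex.exp (-(β : ℂ) * (mu j : ℂ))) * star W * W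
          = Matrix.diagonal (fun j => Complex.exp (-(β : ℂ) * (mu j : ℂ))) * (star W * W) from by
          simp only [Matrix.mul_assoc], hW1, Matrix.mul_one, Matrix.trace_diagonal]
      push_cast
      refine Finset.sum_congr rfl fun j _ => ?_
      simp [neg_mul]
    have t2 : (NormedSpace.exp ((-(β : ℂ)) • K)).trace = A.trace := by
      rw [hconj, show star U * A * U = star U * (A * U) from by simp only [Matrix.mul_assoc],
        Matrix.trace_mul_comm, show A * U * star U = A * (U * star U) from by
          simp only [Matrix.mul_assoc], hU2, Matrix.mul_one]
    have := t1.symm.trans (t2.trans tA)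
    exact_mod_cast this
  have hreal : ∑ i, Real.exp (-(β * lam i)) * lam i ≤
      ∑ i, ∑ j, Real.exp (-(β * lam i)) * mu j * p i j :=
    sum_ineq_aux β hβ lam mu p hp hrow hcol hsum
  constructor
  · rw [tAH, tAK]
    exact_mod_cast hreal
  · set r : ℝ := ∑ i, Real.exp (-(β * lam i)) with hr
    have hrpos : 0 ≤ r := Finset.sum_nonneg fun i _ => (Real.exp_pos _).le
    have e1 : ((A.trace)⁻¹ • A * H).trace = (A.trace)⁻¹ * (A * H).trace := by
      rw [smul_mul_assoc, Matrix.trace_smul, smul_eq_mul]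
    have e2 : (U * ((A.trace)⁻¹ • A) * star U * H).trace = (A.trace)⁻¹ * (A * K).trace := by
      rw [mul_smul_comm, smul_mul_assoc, smul_mul_assoc, Matrix.trace_smul, smul_eq_mul]
      congr 1
      rw [show U * A * star U * H = U * (A * (star U * H)) from by simp only [Matrix.mul_assoc],
        Matrix.trace_mul_comm, hKdef]
      simp only [Matrix.mul_assoc]
    rw [e1, e2, tA, tAH, tAK]
    rw [show (((r : ℝ) : ℂ))⁻¹ = ((r⁻¹ : ℝ) : ℂ) from by push_cast; ring]
    rw [← Complex.ofReal_mul, ← Complex.ofReal_mul, ← Complex.ofReal_sub]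
    rw [show (0 : ℂ) = ((0 : ℝ) : ℂ) from by norm_num]
    rw [Complex.real_le_real]
    have : r⁻¹ * (∑ i, Real.exp (-(β * lam i)) * lam i) ≤
        r⁻¹ * (∑ i, ∑ j, Real.exp (-(β * lam i)) * mu j * p i j) :=
      mul_le_mul_of_nonneg_left hreal (inv_nonneg.mpr hrpos)
    linarith
end

section
/- Let n ≥ 1, let H be an n×n Hermitian complex matrix, let β > 0 be real, set Z = Tr(exp(−βH)) and ρ = exp(−βH)/Z, and let U be an n×n unitary matrix. Then Tr(ρH) − Tr(UρU*·H) = −(1/β)·S(UρU*‖ρ), where for positive definite density matrices σ, τ the quantum relative entropy is S(σ‖τ) = Tr(σ(log σ − log τ)) and log is the matrix logarithm defined by functional calculus on positive definite Hermitian matrices. -/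
open scoped ComplexOrder

open NormedSpace in
lemma stmt12_exp_cfc {n : ℕ} (A : Matrix (Fin n) (Fin n) ℂ)
    (hA : A.IsHermitian) : exp A = cfc Real.exp A := by
  letI := Matrix.linftyOpNormedRing (n := Fin n) (α := ℂ)
  letI := Matrix.linftyOpNormedAlgebra (R := ℝ) (n := Fin n) (α := ℂ)
  letI := Matrix.linftyOpNormedAlgebra (R := ℂ) (n := Fin n) (α := ℂ)
  exact (@CFC.real_exp_eq_normedSpace_exp _ _ _ _ Matrix.IsHermitian.instContinuousFunctionalCalculus _ hA).symm

lemma stmt12_trace_cfc {n : ℕ} {A : Matrix (Fin n) (Fin n) ℂ} (hA : A.IsHermitian) (f : ℝ → ℝ) :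
    (hA.cfc f).trace = ∑ i, (f (hA.eigenvalues i) : ℂ) := by
  rw [Matrix.IsHermitian.cfc, Unitary.conjStarAlgAut_apply, Matrix.trace_mul_cycle,
    Matrix.mem_unitaryGroup_iff'.mp hA.eigenvectorUnitary.2,
    Matrix.one_mul, Matrix.trace_diagonal]
  rfl

open NormedSpace in
lemma stmt12_log_gibbs {n : ℕ} (hn : 1 ≤ n) (H : Matrix (Fin n) (Fin n) ℂ)
    (hH : H.IsHermitian) (β : ℝ) (Z : ℂ)
    (hZ : Z = (exp ((-(β : ℂ)) • H)).trace)
    (ρ : Matrix (Fin n) (Fin n) ℂ) (hρ : ρ = Z⁻¹ • exp ((-(β : ℂ)) • H)) :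
    ∃ c : ℝ, cfc Real.log ρ = (-(β : ℂ)) • H + algebraMap ℝ (Matrix (Fin n) (Fin n) ℂ) c := by
  have hA : ((-(β : ℂ)) • H).IsHermitian := by
    simp [Matrix.IsHermitian, Matrix.conjTranspose_smul, hH.eq]
  set A := (-(β : ℂ)) • H with hAdef
  have hexp : exp A = cfc Real.exp A := stmt12_exp_cfc A hA
  set z : ℝ := ∑ i, Real.exp (hA.eigenvalues i) with hzdef
  have hzpos : 0 < z := by
    have : Nonempty (Fin n) := ⟨⟨0, hn⟩⟩
    exact Finset.sum_pos (fun i _ => Real.exp_pos _) Finset.univ_nonempty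
  have hZz : Z = (z : ℂ) := by
    rw [hZ, hexp, hA.cfc_eq, stmt12_trace_cfc hA, hzdef]
    push_cast
    rfl
  have hρ' : ρ = cfc (fun x : ℝ => z⁻¹ • Real.exp x) A := by
    rw [hρ, hZz, hexp, ← Complex.ofReal_inv, Complex.coe_smul,
      ← cfc_smul z⁻¹ Real.exp A]
  refine ⟨Real.log z⁻¹, ?_⟩
  have hg : ContinuousOn Real.log ((fun x : ℝ => z⁻¹ • Real.exp x) '' spectrum ℝ A) := by
    apply Real.continuousOn_log.mono
    rintro - ⟨x, -, rfl⟩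
    simp only [smul_eq_mul, Set.mem_compl_iff, Set.mem_singleton_iff]
    positivity
  have h1 : cfc Real.log ρ = cfc (fun x : ℝ => Real.log (z⁻¹ • Real.exp x)) A := by
    rw [hρ', ← cfc_comp' Real.log (fun x : ℝ => z⁻¹ • Real.exp x) A hg]
  rw [h1]
  have h2 : cfc (fun x : ℝ => Real.log (z⁻¹ • Real.exp x)) A
      = cfc (fun x : ℝ => x + Real.log z⁻¹) A := by
    apply cfc_congr
    intro x _
    show Real.log (z⁻¹ • Real.exp x) = x + Real.log z⁻¹
    rw [smul_eq_mul, Real.log_mul (by positivity) (Real.exp_ne_zero x), Real.log_exp, add_comm]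
  rw [h2, cfc_add A (fun x => x) (fun _ => Real.log z⁻¹), cfc_id' ℝ A, cfc_const _ A]

noncomputable def stmt12_conjSAH {n : ℕ} (U : Matrix (Fin n) (Fin n) ℂ)
    (hU : U ∈ Matrix.unitaryGroup (Fin n) ℂ) :
    Matrix (Fin n) (Fin n) ℂ →⋆ₐ[ℂ] Matrix (Fin n) (Fin n) ℂ where
  toFun x := U * x * star U
  map_one' := by simpa using Matrix.mem_unitaryGroup_iff.mp hU
  map_mul' x y := by
    have h : star U * U = 1 := Matrix.mem_unitaryGroup_iff'.mp hU
    show U * (x * y) * star U = U * x * star U * (U * y * star U)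
    rw [show U * x * star U * (U * y * star U) = U * x * (star U * U) * y * star U from by
      noncomm_ring, h, mul_one]
    noncomm_ring
  map_zero' := by simp
  map_add' x y := by noncomm_ring
  commutes' c := by
    have h : U * star U = 1 := Matrix.mem_unitaryGroup_iff.mp hU
    simp only [Algebra.algebraMap_eq_smul_one, mul_smul_comm, smul_mul_assoc, mul_one, one_mul, h]
  map_star' x := by
    simp only [StarMul.star_mul, star_star, mul_assoc]


/-- (Lemma 3.1 in finite dimension.) For an `n×n` Hermitian matrix `H`,
`β > 0`, the Gibbs density matrix `ρ = e^{-βH}/Z` with `Z = Tr e^{-βH}`, and a unitary `U`,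
the extracted work equals minus `1/β` times the quantum relative entropy:
`Tr(ρH) - Tr(UρU* H) = -(1/β) Tr(UρU* (log(UρU*) - log ρ))`. -/
theorem stmt12 (n : ℕ) (hn : 1 ≤ n) (H U : Matrix (Fin n) (Fin n) ℂ)
    (hH : H.IsHermitian) (β : ℝ) (hβ : 0 < β)
    (hU : U ∈ Matrix.unitaryGroup (Fin n) ℂ)
    (Z : ℂ) (hZ : Z = (NormedSpace.exp ((-(β : ℂ)) • H)).trace)
    (ρ : Matrix (Fin n) (Fin n) ℂ)
    (hρ : ρ = Z⁻¹ • NormedSpace.exp ((-(β : ℂ)) • H))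
    (hρPD : ρ.PosDef) (hσPD : (U * ρ * star U).PosDef) :
    (ρ * H).trace - (U * ρ * star U * H).trace =
      -(1 / (β : ℂ)) *
        ((U * ρ * star U) * (hσPD.1.cfc Real.log - hρPD.1.cfc Real.log)).trace := by
  obtain ⟨c, hlog⟩ := stmt12_log_gibbs hn H hH β Z hZ ρ hρ
  have hUU' : U * star U = 1 := Matrix.mem_unitaryGroup_iff.mp hU
  have hUU : star U * U = 1 := Matrix.mem_unitaryGroup_iff'.mp hU
  -- continuity of log on spectrum of ρ
  have hspec : ∀ x ∈ spectrum ℝ ρ, 0 < x := by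
    intro x hx
    rw [Matrix.IsHermitian.spectrum_real_eq_range_eigenvalues hρPD.1] at hx
    obtain ⟨i, rfl⟩ := hx
    exact hρPD.eigenvalues_pos i
  have hlogcont : ContinuousOn Real.log (spectrum ℝ ρ) :=
    Real.continuousOn_log.mono fun x hx => ne_of_gt (hspec x hx)
  have hφcont : Continuous (stmt12_conjSAH U hU) := by
    show Continuous fun x : Matrix (Fin n) (Fin n) ℂ => U * x * star U
    exact (continuous_const.matrix_mul continuous_id).matrix_mul continuous_const
  have hσ : IsSelfAdjoint ((stmt12_conjSAH U hU) ρ) := hσPD.1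
  have hmap := StarAlgHomClass.map_cfc (stmt12_conjSAH U hU) Real.log ρ hlogcont hφcont hρPD.1 hσ
  have h1 : hρPD.1.cfc Real.log = cfc Real.log ρ := (hρPD.1.cfc_eq Real.log).symm
  have h2 : hσPD.1.cfc Real.log = U * cfc Real.log ρ * star U := by
    rw [← (hσPD.1.cfc_eq Real.log)]
    exact hmap.symm
  rw [h1, h2, hlog]
  -- simplify the matrix inside the trace
  set A := (-(β : ℂ)) • H with hAdef
  set C := algebraMap ℝ (Matrix (Fin n) (Fin n) ℂ) c with hCdef
  have hC : U * C * star U = C := by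
    rw [hCdef, Algebra.algebraMap_eq_smul_one, mul_smul_comm, smul_mul_assoc, mul_one, hUU']
  have e0 : U * (A + C) * star U - (A + C) = U * A * star U - A := by
    rw [mul_add, add_mul, hC]
    abel
  have e1 : (U * ρ * star U) * (U * A * star U - A)
      = U * (ρ * A) * star U - (U * ρ * star U) * A := by
    rw [mul_sub]
    congr 1
    have : U * ρ * star U * (U * A * star U) = U * ρ * (star U * U) * A * star U := by
      noncomm_ring
    rw [this, hUU, mul_one]
    noncomm_ring
  have e2 : (U * (ρ * A) * star U).trace = (ρ * A).trace := by
    rw [Matrix.trace_mul_cycle, ← mul_assoc, hUU, one_mul]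
  rw [e0, e1, Matrix.trace_sub, e2]
  have e3 : (ρ * A).trace = (-(β : ℂ)) * (ρ * H).trace := by
    rw [hAdef, mul_smul_comm, Matrix.trace_smul, smul_eq_mul]
  have e4 : ((U * ρ * star U) * A).trace = (-(β : ℂ)) * (U * ρ * star U * H).trace := by
    rw [hAdef, mul_smul_comm, Matrix.trace_smul, smul_eq_mul]
  rw [e3, e4]
  have hβ0 : (β : ℂ) ≠ 0 := by
    exact_mod_cast Complex.ofReal_ne_zero.mpr hβ.ne'
  field_simp
  ring
end

section
/- Let n ≥ 1 and let A, B be n×n Hermitian complex matrices. Then Tr(exp(A+B)) ≥ Tr(exp(A)) · exp( Tr(exp(A)·B) / Tr(exp(A)) ). -/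
open scoped ComplexOrder
open Matrix

namespace PB

variable {n : ℕ}

lemma exp_unitary_conj (U : Matrix.unitaryGroup (Fin n) ℂ) (M : Matrix (Fin n) (Fin n) ℂ) :
    NormedSpace.exp ((U : Matrix (Fin n) (Fin n) ℂ) * M * star (U : Matrix (Fin n) (Fin n) ℂ))
      = (U : Matrix (Fin n) (Fin n) ℂ) * NormedSpace.exp M
        * star (U : Matrix (Fin n) (Fin n) ℂ) := by
  have h := Matrix.exp_units_conj (Unitary.toUnits U) M
  have h1 : ((Unitary.toUnits U : (Matrix (Fin n) (Fin n) ℂ)ˣ) : Matrix (Fin n) (Fin n) ℂ)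
      = (U : Matrix (Fin n) (Fin n) ℂ) := rfl
  have h2 : (((Unitary.toUnits U)⁻¹ : (Matrix (Fin n) (Fin n) ℂ)ˣ) : Matrix (Fin n) (Fin n) ℂ)
      = star (U : Matrix (Fin n) (Fin n) ℂ) := rfl
  rw [h1, h2] at h
  exact h

lemma exp_spec {M : Matrix (Fin n) (Fin n) ℂ} (hM : M.IsHermitian) :
    NormedSpace.exp M = (hM.eigenvectorUnitary : Matrix (Fin n) (Fin n) ℂ)
      * Matrix.diagonal (fun i => Complex.exp (hM.eigenvalues i))
      * star (hM.eigenvectorUnitary : Matrix (Fin n) (Fin n) ℂ) := by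
  conv_lhs => rw [hM.spectral_theorem, Unitary.conjStarAlgAut_apply]
  rw [exp_unitary_conj, Matrix.exp_diagonal]
  have : NormedSpace.exp (RCLike.ofReal ∘ hM.eigenvalues : Fin n → ℂ)
      = fun i => Complex.exp (hM.eigenvalues i) := by
    funext i
    rw [Pi.coe_exp]
    simp [← Complex.exp_eq_exp_ℂ, Function.comp]
  rw [this]

lemma trace_exp_spec {M : Matrix (Fin n) (Fin n) ℂ} (hM : M.IsHermitian) :
    (NormedSpace.exp M).trace = ((∑ i, Real.exp (hM.eigenvalues i) : ℝ) : ℂ) := by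
  rw [exp_spec hM, Matrix.trace_mul_cycle,
    Matrix.mem_unitaryGroup_iff'.mp hM.eigenvectorUnitary.2, Matrix.one_mul,
    Matrix.trace_diagonal]
  push_cast
  rfl

lemma conj_diag_apply (V : Matrix.unitaryGroup (Fin n) ℂ) (d : Fin n → ℂ) (i : Fin n) :
    ((V : Matrix (Fin n) (Fin n) ℂ) * Matrix.diagonal d
        * star (V : Matrix (Fin n) (Fin n) ℂ)) i i
      = ∑ k, (Complex.normSq ((V : Matrix (Fin n) (Fin n) ℂ) i k) : ℂ) * d k := by
  rw [Matrix.mul_apply]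
  refine Finset.sum_congr rfl fun k _ => ?_
  rw [Matrix.mul_diagonal, Matrix.star_apply, Complex.star_def, ← Complex.mul_conj]
  ring

lemma sum_normSq_row (V : Matrix.unitaryGroup (Fin n) ℂ) (i : Fin n) :
    ∑ k, Complex.normSq ((V : Matrix (Fin n) (Fin n) ℂ) i k) = 1 := by
  have h := congrFun (congrFun (Matrix.mem_unitaryGroup_iff.mp V.2) i) i
  simp only [Matrix.mul_apply, Matrix.star_apply, Matrix.one_apply_eq, Complex.star_def,
    Complex.mul_conj] at h
  exact_mod_cast h

/-- Peierls inequality for a single diagonal entry. -/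
lemma peierls {H : Matrix (Fin n) (Fin n) ℂ} (hH : H.IsHermitian) (i : Fin n) :
    Real.exp ((H i i).re) ≤ ((NormedSpace.exp H) i i).re := by
  set V := hH.eigenvectorUnitary with hV
  set μ := hH.eigenvalues with hμ
  set w : Fin n → ℝ := fun k => Complex.normSq ((V : Matrix (Fin n) (Fin n) ℂ) i k) with hw
  have hwsum : ∑ k, w k = 1 := sum_normSq_row V i
  have hH_diag : (H i i).re = ∑ k, w k * μ k := by
    conv_lhs => rw [hH.spectral_theorem, Unitary.conjStarAlgAut_apply, conj_diag_apply]
    rw [Complex.re_sum]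
    refine Finset.sum_congr rfl fun k _ => ?_
    have h2 : ((RCLike.ofReal ∘ μ) k : ℂ) = ((μ k : ℝ) : ℂ) := rfl
    rw [h2, ← Complex.ofReal_mul, Complex.ofReal_re]
  have hE_diag : ((NormedSpace.exp H) i i).re = ∑ k, w k * Real.exp (μ k) := by
    rw [exp_spec hH, conj_diag_apply, Complex.re_sum]
    refine Finset.sum_congr rfl fun k _ => ?_
    rw [← Complex.ofReal_exp, ← Complex.ofReal_mul, Complex.ofReal_re]
  rw [hH_diag, hE_diag]
  have hj := convexOn_exp.map_sum_le (t := Finset.univ) (w := w) (p := μ)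
    (fun k _ => Complex.normSq_nonneg _) hwsum (fun k _ => Set.mem_univ _)
  simpa using hj

end PB

/-- (Peierls–Bogoliubov inequality.) For `n×n` Hermitian matrices `A, B`,
`Tr(e^{A+B}) ≥ Tr(e^A) · exp(Tr(e^A B)/Tr(e^A))`. -/
theorem stmt15 (n : ℕ) (hn : 1 ≤ n) (A B : Matrix (Fin n) (Fin n) ℂ)
    (hA : A.IsHermitian) (hB : B.IsHermitian) :
    (NormedSpace.exp A).trace *
        Complex.exp ((NormedSpace.exp A * B).trace / (NormedSpace.exp A).trace) ≤
      (NormedSpace.exp (A + B)).trace := by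
  haveI : Nonempty (Fin n) := Fin.pos_iff_nonempty.mp hn
  classical
  set U := hA.eigenvectorUnitary with hU
  set lam := hA.eigenvalues with hlam
  set Z : ℝ := ∑ i, Real.exp (lam i) with hZ
  have hZpos : 0 < Z := Finset.sum_pos (fun i _ => Real.exp_pos _) Finset.univ_nonempty
  set C : Matrix (Fin n) (Fin n) ℂ :=
    star (U : Matrix (Fin n) (Fin n) ℂ) * B * (U : Matrix (Fin n) (Fin n) ℂ) with hC
  have hCherm : C.IsHermitian := by
    rw [hC, Matrix.IsHermitian, Matrix.conjTranspose_mul, Matrix.conjTranspose_mul,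
      hB.eq, ← Matrix.star_eq_conjTranspose, ← Matrix.star_eq_conjTranspose, star_star,
      Matrix.mul_assoc]
  set b : Fin n → ℝ := fun i => (C i i).re with hb
  have hCb : ∀ i, C i i = (b i : ℂ) := fun i => (hCherm.coe_re_apply_self i).symm
  set H : Matrix (Fin n) (Fin n) ℂ :=
    star (U : Matrix (Fin n) (Fin n) ℂ) * (A + B) * (U : Matrix (Fin n) (Fin n) ℂ) with hH
  have hHherm : H.IsHermitian := by
    rw [hH, Matrix.IsHermitian, Matrix.conjTranspose_mul, Matrix.conjTranspose_mul,
      (hA.add hB).eq, ← Matrix.star_eq_conjTranspose, ← Matrix.star_eq_conjTranspose, star_star,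
      Matrix.mul_assoc]
  have hHsplit : H = Matrix.diagonal (fun i => ((lam i : ℝ) : ℂ)) + C := by
    rw [hH, hC, Matrix.mul_add, Matrix.add_mul, ← Unitary.conjStarAlgAut_star_apply (S := ℂ),
      hA.conjStarAlgAut_star_eigenvectorUnitary]
    rfl
  have hHdiag : ∀ i, (H i i).re = lam i + b i := by
    intro i
    rw [hHsplit]
    simp [hCb i]
  have hexpH : NormedSpace.exp H = star (U : Matrix (Fin n) (Fin n) ℂ)
      * NormedSpace.exp (A + B) * (U : Matrix (Fin n) (Fin n) ℂ) := by
    have h := PB.exp_unitary_conj (star U) (A + B)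
    simpa [Unitary.coe_star, star_star] using h
  have htraceH : (NormedSpace.exp H).trace = (NormedSpace.exp (A + B)).trace := by
    rw [hexpH, Matrix.trace_mul_cycle, Matrix.mem_unitaryGroup_iff.mp U.2, Matrix.one_mul]
  set R : ℝ := ∑ i, Real.exp ((hA.add hB).eigenvalues i) with hR
  have htrace_real : (NormedSpace.exp (A + B)).trace = (R : ℂ) := PB.trace_exp_spec (hA.add hB)
  have hstep1 : ∑ i, Real.exp (lam i + b i) ≤ R := by
    have h1 : ∀ i, Real.exp (lam i + b i) ≤ ((NormedSpace.exp H) i i).re := by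
      intro i
      have h2 := PB.peierls hHherm i
      rwa [hHdiag i] at h2
    calc ∑ i, Real.exp (lam i + b i) ≤ ∑ i, ((NormedSpace.exp H) i i).re :=
          Finset.sum_le_sum fun i _ => h1 i
      _ = ((NormedSpace.exp H).trace).re := by rw [Matrix.trace]; exact (Complex.re_sum _ _).symm
      _ = R := by rw [htraceH, htrace_real, Complex.ofReal_re]
  set t : ℝ := ∑ i, Real.exp (lam i) * b i with ht
  have hstep2 : Z * Real.exp (t / Z) ≤ ∑ i, Real.exp (lam i + b i) := by
    set p : Fin n → ℝ := fun i => Real.exp (lam i) / Z with hp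
    have hpsum : ∑ i, p i = 1 := by
      rw [hp, ← Finset.sum_div, ← hZ, div_self hZpos.ne']
    have hjensen := convexOn_exp.map_sum_le (t := Finset.univ) (w := p) (p := b)
      (fun i _ => div_nonneg (Real.exp_pos _).le hZpos.le) hpsum (fun i _ => Set.mem_univ _)
    have hpt : ∑ i, p i • b i = t / Z := by
      rw [ht, Finset.sum_div]
      refine Finset.sum_congr rfl fun i _ => ?_
      rw [hp, smul_eq_mul, div_mul_eq_mul_div]
    rw [hpt] at hjensen
    calc Z * Real.exp (t / Z) ≤ Z * ∑ i, p i • Real.exp (b i) :=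
          mul_le_mul_of_nonneg_left hjensen hZpos.le
      _ = ∑ i, Real.exp (lam i) * Real.exp (b i) := by
          rw [Finset.mul_sum]
          refine Finset.sum_congr rfl fun i _ => ?_
          rw [hp, smul_eq_mul]
          field_simp
      _ = ∑ i, Real.exp (lam i + b i) :=
          Finset.sum_congr rfl fun i _ => (Real.exp_add _ _).symm
  have htraceA : (NormedSpace.exp A).trace = (Z : ℂ) := PB.trace_exp_spec hA
  have htraceAB : (NormedSpace.exp A * B).trace = (t : ℂ) := by
    rw [PB.exp_spec hA, Matrix.mul_assoc, Matrix.mul_assoc, Matrix.trace_mul_comm,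
      Matrix.mul_assoc, ← hC, Matrix.trace, ht]
    push_cast
    refine Finset.sum_congr rfl fun i _ => ?_
    rw [Matrix.diag_apply, Matrix.diagonal_mul, hCb i]
  rw [htraceA, htraceAB, htrace_real, ← Complex.ofReal_div, ← Complex.ofReal_exp,
    ← Complex.ofReal_mul, Complex.real_le_real]
  exact le_trans hstep2 hstep1
end

section
/- Let n ≥ 1 and let A, B be n×n Hermitian complex matrices. Then Tr(exp(A+B)) ≤ Tr(exp(A)·exp(B)). -/
set_option linter.unusedSectionVars false
set_option maxHeartbeats 1000000

open scoped ComplexOrder Matrix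
open NormedSpace Filter



namespace GT
variable {n : ℕ}

local notation "Mat" => Matrix (Fin n) (Fin n) ℂ

lemma pow_mul_shift (a b : Mat) (k : ℕ) : (a*b)^k * a = a * (b*a)^k := by
  induction k with
  | zero => simp
  | succ k ih => rw [pow_succ, pow_succ, mul_assoc, ← mul_assoc ((a*b)^k), ← mul_assoc ((a*b)^k), ih, mul_assoc, mul_assoc]

lemma trace_cycle_pow (a b : Mat) (k : ℕ) : ((a*b)^k).trace = ((b*a)^k).trace := by
  cases k with
  | zero => simp
  | succ k =>
    rw [pow_succ, ← mul_assoc, pow_mul_shift, Matrix.trace_mul_comm, ← mul_assoc, ← pow_succ']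

/-- sum of squared norms -/
noncomputable def S (X : Mat) : ℝ := ∑ i, ∑ j, ‖X j i‖^2

lemma S_nonneg (X : Mat) : 0 ≤ S X :=
  Finset.sum_nonneg fun _ _ => Finset.sum_nonneg fun _ _ => sq_nonneg _

lemma conj_mul_self (z : ℂ) : (star z) * z = ((‖z‖^2 : ℝ) : ℂ) := by
  simp [Complex.star_def, Complex.conj_mul']

lemma trace_conjTranspose_mul (X : Mat) : (Xᴴ * X).trace = ((S X : ℝ) : ℂ) := by
  simp only [Matrix.trace, Matrix.diag, Matrix.mul_apply, Matrix.conjTranspose_apply, S,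
    conj_mul_self]
  push_cast
  rfl

lemma trace_mul_conjTranspose (X : Mat) : (X * Xᴴ).trace = ((S X : ℝ) : ℂ) := by
  rw [Matrix.trace_mul_comm, trace_conjTranspose_mul]

end GT

namespace GT
variable {n : ℕ}

lemma trace_conjTranspose_mul_eq_sum (X Y : Matrix (Fin n) (Fin n) ℂ) :
    (Xᴴ * Y).trace = ∑ p : Fin n × Fin n, star (X p.2 p.1) * Y p.2 p.1 := by
  rw [Fintype.sum_prod_type]
  simp [Matrix.trace, Matrix.diag, Matrix.mul_apply, Matrix.conjTranspose_apply]

lemma trace_cs (X Y : Matrix (Fin n) (Fin n) ℂ) :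
    ‖(Xᴴ * Y).trace‖ ≤ Real.sqrt (S X) * Real.sqrt (S Y) := by
  rw [trace_conjTranspose_mul_eq_sum]
  have h1 : ‖∑ p : Fin n × Fin n, star (X p.2 p.1) * Y p.2 p.1‖
      ≤ ∑ p : Fin n × Fin n, ‖X p.2 p.1‖ * ‖Y p.2 p.1‖ := by
    refine (norm_sum_le _ _).trans ?_
    refine Finset.sum_le_sum fun p _ => ?_
    rw [norm_mul]
    simp
  refine h1.trans ?_
  have h2 := Real.sum_mul_le_sqrt_mul_sqrt (Finset.univ : Finset (Fin n × Fin n))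
    (fun p => ‖X p.2 p.1‖) (fun p => ‖Y p.2 p.1‖)
  refine h2.trans_eq ?_
  congr 1 <;> · congr 1; rw [Fintype.sum_prod_type]; simp only [S]

end GT

namespace GT
variable {n : ℕ}

lemma S_eq_re_trace (X : Matrix (Fin n) (Fin n) ℂ) : S X = ((X * Xᴴ).trace).re := by
  rw [trace_mul_conjTranspose]; simp

lemma abs_trace_mul_conjTranspose (X : Matrix (Fin n) (Fin n) ℂ) :
    ‖(X * Xᴴ).trace‖ = S X := by
  rw [trace_mul_conjTranspose, Complex.norm_of_nonneg (S_nonneg X)]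

lemma S_conjTranspose (X : Matrix (Fin n) (Fin n) ℂ) : S Xᴴ = S X := by
  have h1 : ((Xᴴ * Xᴴᴴ).trace) = ((X * Xᴴ).trace) := by
    rw [Matrix.conjTranspose_conjTranspose, Matrix.trace_mul_comm]
  rw [S_eq_re_trace, S_eq_re_trace, h1]

lemma key (s : ℕ) :
    (∀ N R : Matrix (Fin n) (Fin n) ℂ,
      ‖(((N*Nᴴ) * (R*Rᴴ))^(2^s)).trace‖
        ≤ ((((N*Nᴴ)^(2^s)) * ((R*Rᴴ)^(2^s))).trace).re)
    ∧ (∀ M : Matrix (Fin n) (Fin n) ℂ,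
      ‖(M^(2^(s+1))).trace‖ ≤ (((M*Mᴴ)^(2^s)).trace).re) := by
  induction s with
  | zero =>
    constructor
    · intro N R
      simp only [pow_zero, pow_one]
      have h1 : ((N*Nᴴ) * (R*Rᴴ)).trace = ((Rᴴ*N) * (Rᴴ*N)ᴴ).trace := by
        rw [Matrix.conjTranspose_mul, Matrix.conjTranspose_conjTranspose]
        rw [show (N*Nᴴ) * (R*Rᴴ) = (N*Nᴴ*R)*Rᴴ by noncomm_ring,
          Matrix.trace_mul_comm]
        congr 1
        noncomm_ring
      rw [h1, abs_trace_mul_conjTranspose, ← S_eq_re_trace]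
    · intro M
      have h1 : M^(2^1) = Mᴴᴴ * M := by
        rw [Matrix.conjTranspose_conjTranspose]
        norm_num
        rw [pow_two]
      rw [h1]
      refine (trace_cs Mᴴ M).trans ?_
      rw [S_conjTranspose, Real.mul_self_sqrt (S_nonneg M)]
      norm_num
      rw [← S_eq_re_trace]
  | succ s ih =>
    obtain ⟨K, L⟩ := ih
    constructor
    · intro N R
      set P : Matrix (Fin n) (Fin n) ℂ := N*Nᴴ with hPdef
      set Q : Matrix (Fin n) (Fin n) ℂ := R*Rᴴ with hQdef
      have hP : Pᴴ = P := by rw [hPdef, Matrix.conjTranspose_mul, Matrix.conjTranspose_conjTranspose]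
      have hQ : Qᴴ = Q := by rw [hQdef, Matrix.conjTranspose_mul, Matrix.conjTranspose_conjTranspose]
      have step1 : ‖((P*Q)^(2^(s+1))).trace‖
          ≤ ((((P*Q)*(P*Q)ᴴ)^(2^s)).trace).re := L (P*Q)
      have e1 : (((P*Q)*(P*Q)ᴴ)^(2^s)).trace = (((P*P)*(Q*Q))^(2^s)).trace := by
        have : (P*Q)*(P*Q)ᴴ = (P*(Q*Q))*P := by
          rw [Matrix.conjTranspose_mul, hP, hQ]; noncomm_ring
        rw [this, trace_cycle_pow]
        congr 2
        noncomm_ring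
      have step2 : ((((P*P)*(Q*Q))^(2^s)).trace).re
          ≤ ‖(((P*P)*(Q*Q))^(2^s)).trace‖ := Complex.re_le_norm _
      have step3 : ‖(((P*Pᴴ)*(Q*Qᴴ))^(2^s)).trace‖
          ≤ ((((P*Pᴴ)^(2^s)) * ((Q*Qᴴ)^(2^s))).trace).re := K P Q
      rw [hP, hQ] at step3
      have epow : ∀ X : Matrix (Fin n) (Fin n) ℂ, (X*X)^(2^s) = X^(2^(s+1)) := by
        intro X
        rw [← pow_two, ← pow_mul, pow_succ']
      rw [epow P, epow Q] at step3
      calc ‖((P*Q)^(2^(s+1))).trace‖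
          ≤ ((((P*P)*(Q*Q))^(2^s)).trace).re := by rw [← e1]; exact step1
        _ ≤ ‖(((P*P)*(Q*Q))^(2^s)).trace‖ := step2
        _ ≤ (((P^(2^(s+1))) * (Q^(2^(s+1)))).trace).re := step3
    · intro M
      set P : Matrix (Fin n) (Fin n) ℂ := Mᴴ*M with hPdef
      set Q : Matrix (Fin n) (Fin n) ℂ := M*Mᴴ with hQdef
      have hP : Pᴴ = P := by rw [hPdef, Matrix.conjTranspose_mul, Matrix.conjTranspose_conjTranspose]
      have hQ : Qᴴ = Q := by rw [hQdef, Matrix.conjTranspose_mul, Matrix.conjTranspose_conjTranspose]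
      have e0 : M^(2^(s+2)) = (M*M)^(2^(s+1)) := by
        rw [← pow_two, ← pow_mul, ← pow_succ']
      have step1 : ‖(((M*M))^(2^(s+1))).trace‖
          ≤ ((((M*M)*(M*M)ᴴ)^(2^s)).trace).re := L (M*M)
      have e1 : (((M*M)*(M*M)ᴴ)^(2^s)).trace = ((Q*P)^(2^s)).trace := by
        have : (M*M)*(M*M)ᴴ = M*(M*Mᴴ*Mᴴ) := by
          rw [Matrix.conjTranspose_mul]; noncomm_ring
        rw [this, trace_cycle_pow]
        congr 2
        rw [hQdef, hPdef]; noncomm_ring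
      have step2 : (((Q*P)^(2^s)).trace).re ≤ ‖((Q*P)^(2^s)).trace‖ :=
        Complex.re_le_norm _
      have step3 : ‖(((M*Mᴴ)*(Mᴴ*Mᴴᴴ))^(2^s)).trace‖
          ≤ ((((M*Mᴴ)^(2^s)) * ((Mᴴ*Mᴴᴴ)^(2^s))).trace).re := K M Mᴴ
      rw [Matrix.conjTranspose_conjTranspose] at step3
      rw [← hQdef, ← hPdef] at step3
      have hQt : (Q^(2^s))ᴴ = Q^(2^s) := by rw [Matrix.conjTranspose_pow, hQ]
      have hPt : (P^(2^s))ᴴ = P^(2^s) := by rw [Matrix.conjTranspose_pow, hP]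
      have hSQ : S (Q^(2^s)) = ((Q^(2^(s+1))).trace).re := by
        rw [S_eq_re_trace, hQt, ← pow_add, ← two_mul, ← pow_succ']
      have hSP : S (P^(2^s)) = S (Q^(2^s)) := by
        rw [S_eq_re_trace, S_eq_re_trace, hQt, hPt, ← pow_add, ← pow_add,
          hPdef, hQdef, trace_cycle_pow]
      have step4 : (((Q^(2^s)) * (P^(2^s))).trace).re ≤ ((Q^(2^(s+1))).trace).re := by
        refine (Complex.re_le_norm _).trans ?_
        have := trace_cs (Q^(2^s)) (P^(2^s))
        rw [hQt] at this
        refine this.trans ?_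
        rw [hSP, Real.mul_self_sqrt (S_nonneg _), hSQ]
      calc ‖(M^(2^(s+1+1))).trace‖
          = ‖((M*M)^(2^(s+1))).trace‖ := by rw [e0]
        _ ≤ ((((M*M)*(M*M)ᴴ)^(2^s)).trace).re := step1
        _ = (((Q*P)^(2^s)).trace).re := by rw [e1]
        _ ≤ ‖((Q*P)^(2^s)).trace‖ := step2
        _ ≤ (((Q^(2^s)) * (P^(2^s))).trace).re := step3
        _ ≤ ((Q^(2^(s+1))).trace).re := step4

end GT


section Banach
variable {𝔸 : Type*} [NormedRing 𝔸] [NormedAlgebra ℂ 𝔸] [CompleteSpace 𝔸] [NormOneClass 𝔸]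

lemma exp_tsum (x : 𝔸) : exp x = ∑' k : ℕ, (k.factorial⁻¹ : ℂ) • x^k :=
  congrFun (exp_eq_tsum ℂ) x

lemma term_norm_le (x : 𝔸) (k : ℕ) : ‖(k.factorial⁻¹ : ℂ) • x^k‖ ≤ ‖x‖^k / k.factorial := by
  rw [norm_smul]
  have h1 : ‖(k.factorial⁻¹ : ℂ)‖ = (k.factorial : ℝ)⁻¹ := by
    rw [norm_inv]; norm_cast
  rw [h1, div_eq_inv_mul]
  exact mul_le_mul_of_nonneg_left (norm_pow_le x k) (by positivity)

lemma fact_div_le (t : ℝ) (ht : 0 ≤ t) (j k : ℕ) (h : j ≤ k) :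
    t^k / k.factorial ≤ t^k / j.factorial := by
  have h1 : (0:ℝ) < j.factorial := Nat.cast_pos.2 j.factorial_pos
  have h2 : (j.factorial:ℝ) ≤ k.factorial := by exact_mod_cast Nat.factorial_le h
  have h3 : (0:ℝ) ≤ t^k := by positivity
  gcongr
  

lemma real_exp_eq (t : ℝ) : Real.exp t = ∑' k : ℕ, t^k / k.factorial := by
  rw [Real.exp_eq_exp_ℝ, NormedSpace.exp_eq_tsum_div]

lemma norm_exp_le_exp (x : 𝔸) : ‖exp x‖ ≤ Real.exp ‖x‖ := by
  rw [exp_tsum, real_exp_eq]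
  refine (norm_tsum_le_tsum_norm (norm_expSeries_summable' x)).trans ?_
  exact Summable.tsum_le_tsum (term_norm_le x) (norm_expSeries_summable' x)
    (Real.summable_pow_div_factorial _)

lemma norm_exp_sub_one_le (x : 𝔸) : ‖exp x - 1‖ ≤ ‖x‖ * Real.exp ‖x‖ := by
  have hs := expSeries_summable' (𝕂 := ℂ) x
  have hn := norm_expSeries_summable' (𝕂 := ℂ) x
  have h0 : exp x - 1 = ∑' k : ℕ, (((k+1).factorial⁻¹ : ℂ)) • x^(k+1) := by
    rw [exp_tsum, Summable.tsum_eq_zero_add hs]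
    simp
  rw [h0]
  have hn1 : Summable fun k : ℕ => ‖(((k+1).factorial⁻¹ : ℂ)) • x^(k+1)‖ :=
    (summable_nat_add_iff 1).2 hn
  refine (norm_tsum_le_tsum_norm hn1).trans ?_
  have hb : ∀ k : ℕ, ‖(((k+1).factorial⁻¹ : ℂ)) • x^(k+1)‖ ≤ ‖x‖ * (‖x‖^k / k.factorial) := by
    intro k
    refine (term_norm_le x (k+1)).trans ?_
    refine (fact_div_le ‖x‖ (norm_nonneg x) k (k+1) k.le_succ).trans_eq ?_
    rw [pow_succ]; ring
  refine (Summable.tsum_le_tsum hb hn1 ?_).trans ?_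
  · exact (Real.summable_pow_div_factorial ‖x‖).mul_left _
  · rw [tsum_mul_left, real_exp_eq]

lemma norm_exp_sub_one_sub_le (x : 𝔸) : ‖exp x - 1 - x‖ ≤ ‖x‖^2 * Real.exp ‖x‖ := by
  have hs := expSeries_summable' (𝕂 := ℂ) x
  have hn := norm_expSeries_summable' (𝕂 := ℂ) x
  have hs1 : Summable fun k : ℕ => ((k+1).factorial⁻¹ : ℂ) • x^(k+1) :=
    (summable_nat_add_iff 1).2 hs
  have h0 : exp x - 1 - x = ∑' k : ℕ, (((k+2).factorial⁻¹ : ℂ)) • x^(k+2) := by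
    rw [exp_tsum, Summable.tsum_eq_zero_add hs, Summable.tsum_eq_zero_add hs1]
    simp only [Nat.factorial_zero, Nat.factorial_one, pow_zero, pow_one, Nat.cast_one, inv_one,
      one_smul]
    norm_num
  rw [h0]
  have hn2 : Summable fun k : ℕ => ‖(((k+2).factorial⁻¹ : ℂ)) • x^(k+2)‖ :=
    (summable_nat_add_iff 2).2 hn
  refine (norm_tsum_le_tsum_norm hn2).trans ?_
  have hb : ∀ k : ℕ, ‖(((k+2).factorial⁻¹ : ℂ)) • x^(k+2)‖ ≤ ‖x‖^2 * (‖x‖^k / k.factorial) := by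
    intro k
    refine (term_norm_le x (k+2)).trans ?_
    refine (fact_div_le ‖x‖ (norm_nonneg x) k (k+2) (by omega)).trans_eq ?_
    rw [pow_add]; ring
  refine (Summable.tsum_le_tsum hb hn2 ?_).trans ?_
  · exact (Real.summable_pow_div_factorial ‖x‖).mul_left _
  · rw [tsum_mul_left, real_exp_eq]

end Banach

section Banach2
variable {𝔸 : Type*} [NormedRing 𝔸] [NormedAlgebra ℂ 𝔸] [CompleteSpace 𝔸] [NormOneClass 𝔸]

lemma key_bound (x y : 𝔸) :
    ‖exp x * exp y - exp (x + y)‖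
      ≤ 2 * (‖x‖ + ‖y‖)^2 * Real.exp (‖x‖ + ‖y‖) := by
  have hid : exp x * exp y - exp (x + y)
      = (exp x * (exp y - 1 - y)) + ((exp x - 1) * y) + (exp x - 1 - x)
        - (exp (x + y) - 1 - (x + y)) := by
    noncomm_ring
  rw [hid]
  set a := ‖x‖ with ha
  set b := ‖y‖ with hb
  have ha0 : 0 ≤ a := norm_nonneg x
  have hb0 : 0 ≤ b := norm_nonneg y
  have h1 : ‖exp x * (exp y - 1 - y)‖ ≤ b^2 * Real.exp (a + b) := by
    refine (norm_mul_le _ _).trans ?_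
    have := mul_le_mul (norm_exp_le_exp x) (norm_exp_sub_one_sub_le y)
      (norm_nonneg _) (Real.exp_pos _).le
    refine this.trans_eq ?_
    rw [Real.exp_add]; ring
  have h2 : ‖(exp x - 1) * y‖ ≤ a * b * Real.exp (a + b) := by
    refine (norm_mul_le _ _).trans ?_
    have he : Real.exp a ≤ Real.exp (a + b) := Real.exp_le_exp.2 (by linarith)
    have e1 : ‖exp x - 1‖ ≤ a * Real.exp (a + b) :=
      (norm_exp_sub_one_le x).trans (mul_le_mul_of_nonneg_left he ha0)
    calc ‖exp x - 1‖ * ‖y‖ ≤ (a * Real.exp (a + b)) * b :=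
          mul_le_mul e1 le_rfl hb0 (by positivity)
      _ = a * b * Real.exp (a + b) := by ring
  have h3 : ‖exp x - 1 - x‖ ≤ a^2 * Real.exp (a + b) := by
    refine (norm_exp_sub_one_sub_le x).trans ?_
    have he : Real.exp a ≤ Real.exp (a + b) := Real.exp_le_exp.2 (by linarith)
    exact mul_le_mul_of_nonneg_left he (by positivity)
  have h4 : ‖exp (x + y) - 1 - (x + y)‖ ≤ (a + b)^2 * Real.exp (a + b) := by
    refine (norm_exp_sub_one_sub_le (x + y)).trans ?_
    have hxy : ‖x + y‖ ≤ a + b := norm_add_le x y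
    have h5 : ‖x + y‖^2 ≤ (a + b)^2 := by nlinarith [norm_nonneg (x+y)]
    have h6 : Real.exp ‖x + y‖ ≤ Real.exp (a + b) := Real.exp_le_exp.2 hxy
    exact mul_le_mul h5 h6 (Real.exp_pos _).le (by positivity)
  calc ‖exp x * (exp y - 1 - y) + (exp x - 1) * y + (exp x - 1 - x)
          - (exp (x + y) - 1 - (x + y))‖
      ≤ ‖exp x * (exp y - 1 - y) + (exp x - 1) * y + (exp x - 1 - x)‖
          + ‖exp (x + y) - 1 - (x + y)‖ := norm_sub_le _ _
    _ ≤ (‖exp x * (exp y - 1 - y)‖ + ‖(exp x - 1) * y‖ + ‖exp x - 1 - x‖)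
          + ‖exp (x + y) - 1 - (x + y)‖ := by
        gcongr
        try exact norm_add₃_le
    _ ≤ (b^2 * Real.exp (a+b) + a*b*Real.exp (a+b) + a^2*Real.exp (a+b))
          + (a+b)^2 * Real.exp (a+b) := by gcongr
    _ ≤ 2 * (a + b)^2 * Real.exp (a + b) := by nlinarith [Real.exp_pos (a+b), mul_nonneg ha0 hb0]

lemma pow_sub_pow_bound (u v : 𝔸) (K : ℝ) (hK : 1 ≤ K) (hu : ‖u‖ ≤ K) (hv : ‖v‖ ≤ K) :
    ∀ m : ℕ, ‖u^m - v^m‖ ≤ m * K^m * ‖u - v‖ := by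
  have hK0 : (0:ℝ) ≤ K := le_trans zero_le_one hK
  intro m
  induction m with
  | zero => simp
  | succ m ih =>
    have hid : u^(m+1) - v^(m+1) = u^m * (u - v) + (u^m - v^m) * v := by noncomm_ring
    rw [hid]
    have h1 : ‖u^m * (u - v)‖ ≤ K^m * ‖u - v‖ := by
      refine (norm_mul_le _ _).trans ?_
      exact mul_le_mul_of_nonneg_right ((norm_pow_le u m).trans
        (pow_le_pow_left₀ (norm_nonneg u) hu m)) (norm_nonneg _)
    have h2 : ‖(u^m - v^m) * v‖ ≤ (m * K^m * ‖u - v‖) * K := by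
      refine (norm_mul_le _ _).trans ?_
      exact mul_le_mul ih hv (norm_nonneg v) (by positivity)
    refine (norm_add_le _ _).trans ?_
    have hKm : K^m ≤ K^(m+1) := by
      calc K^m = K^m * 1 := (mul_one _).symm
      _ ≤ K^m * K := by gcongr
      _ = K^(m+1) := (pow_succ K m).symm
    calc ‖u^m * (u - v)‖ + ‖(u^m - v^m) * v‖
        ≤ K^m * ‖u - v‖ + (m * K^m * ‖u - v‖) * K := add_le_add h1 h2
      _ = (1 * K^m + m * (K^m * K)) * ‖u - v‖ := by ring
      _ ≤ (1 * K^(m+1) + m * K^(m+1)) * ‖u - v‖ := by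
          have : K^m * K = K^(m+1) := (pow_succ K m).symm
          rw [this]
          gcongr
      _ = (↑(m+1)) * K^(m+1) * ‖u - v‖ := by push_cast; ring

end Banach2

section Banach3
variable {𝔸 : Type*} [NormedRing 𝔸] [NormedAlgebra ℂ 𝔸] [CompleteSpace 𝔸] [NormOneClass 𝔸]

lemma trotter (x y : 𝔸) :
    Filter.Tendsto
      (fun k : ℕ => (exp ((((2:ℂ)^k)⁻¹) • x) * exp ((((2:ℂ)^k)⁻¹) • y))^(2^k))
      Filter.atTop (nhds (exp (x + y))) := by
  set L : ℝ := ‖x‖ + ‖y‖ with hL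
  have hL0 : 0 ≤ L := by positivity
  have hbound : ∀ k : ℕ,
      ‖(exp ((((2:ℂ)^k)⁻¹) • x) * exp ((((2:ℂ)^k)⁻¹) • y))^(2^k) - exp (x + y)‖
        ≤ (2 * L^2 * Real.exp (2*L)) * ((2:ℝ)^k)⁻¹ := by
    intro k
    set c : ℂ := ((2:ℂ)^k)⁻¹ with hc
    set r : ℝ := ((2:ℝ)^k)⁻¹ with hr
    have hr0 : 0 ≤ r := by positivity
    have hr1 : r ≤ 1 := by
      rw [hr]
      rw [inv_le_one_iff₀]
      right
      exact one_le_pow₀ one_le_two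
    have hnc : ‖c‖ = r := by
      rw [hc, hr, norm_inv, norm_pow]
      norm_num
    have hmr : (2^k : ℕ) * r = 1 := by
      rw [hr]
      push_cast
      rw [mul_inv_cancel₀ (by positivity)]
    have hnx : ‖c • x‖ = r * ‖x‖ := by rw [norm_smul, hnc]
    have hny : ‖c • y‖ = r * ‖y‖ := by rw [norm_smul, hnc]
    have hnxy : ‖c • x‖ + ‖c • y‖ = r * L := by rw [hnx, hny, hL]; ring
    set u : 𝔸 := exp (c • x) * exp (c • y) with hu
    set v : 𝔸 := exp (c • (x + y)) with hv
    have hsm : ∀ z : 𝔸, (2^k : ℕ) • (c • z) = z := by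
      intro z
      rw [← Nat.cast_smul_eq_nsmul ℂ, smul_smul, hc]
      push_cast
      rw [mul_inv_cancel₀ (pow_ne_zero k two_ne_zero), one_smul]
    have hvp : v^(2^k) = exp (x + y) := by
      letI : NormedAlgebra ℚ 𝔸 := NormedAlgebra.restrictScalars ℚ ℂ 𝔸
      rw [hv, ← exp_nsmul, hsm]
    have hK1 : (1:ℝ) ≤ Real.exp (r * L) := Real.one_le_exp (by positivity)
    have hnu : ‖u‖ ≤ Real.exp (r * L) := by
      rw [hu]
      refine (norm_mul_le _ _).trans ?_
      have := mul_le_mul (norm_exp_le_exp (c • x)) (norm_exp_le_exp (c • y))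
        (norm_nonneg _) (Real.exp_pos _).le
      refine this.trans_eq ?_
      rw [← Real.exp_add, ← hnxy]
    have hnv : ‖v‖ ≤ Real.exp (r * L) := by
      rw [hv]
      refine (norm_exp_le_exp _).trans ?_
      refine Real.exp_le_exp.2 ?_
      rw [norm_smul, hnc]
      calc r * ‖x + y‖ ≤ r * L := by
            refine mul_le_mul_of_nonneg_left ?_ hr0
            rw [hL]; exact norm_add_le x y
        _ = r * L := rfl
    have huv : ‖u - v‖ ≤ 2 * (r*L)^2 * Real.exp (r * L) := by
      rw [hu, hv, smul_add]
      refine (key_bound (c • x) (c • y)).trans ?_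
      rw [hnx, hny]
      have h1 : r * ‖x‖ + r * ‖y‖ = r * L := by rw [hL]; ring
      rw [h1]
    have hpow := pow_sub_pow_bound u v (Real.exp (r*L)) hK1 hnu hnv (2^k)
    have hKm : (Real.exp (r*L))^(2^k) = Real.exp L := by
      rw [← Real.exp_nat_mul, ← mul_assoc, hmr, one_mul]
    rw [hvp] at hpow
    refine hpow.trans ?_
    rw [hKm]
    have hexp : Real.exp (r * L) ≤ Real.exp L := by
      refine Real.exp_le_exp.2 ?_
      nlinarith
    have hfin : (2^k : ℕ) * Real.exp L * (2 * (r*L)^2 * Real.exp (r * L))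
        ≤ 2 * L^2 * Real.exp (2*L) * r := by
      have e1 : Real.exp (2*L) = Real.exp L * Real.exp L := by
        rw [← Real.exp_add]; ring_nf
      have e2 : ((2^k : ℕ) : ℝ) * r^2 = r := by
        calc ((2^k : ℕ) : ℝ) * r^2 = (((2^k : ℕ) : ℝ) * r) * r := by ring
        _ = r := by rw [hmr, one_mul]
      calc (2^k : ℕ) * Real.exp L * (2 * (r*L)^2 * Real.exp (r * L))
          ≤ (2^k : ℕ) * Real.exp L * (2 * (r*L)^2 * Real.exp L) := by
            have hnn : (0:ℝ) ≤ ((2^k : ℕ) : ℝ) * Real.exp L := by positivity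
            refine mul_le_mul_of_nonneg_left ?_ hnn
            exact mul_le_mul_of_nonneg_left hexp (by positivity)
        _ = 2 * L^2 * (Real.exp L * Real.exp L) * (((2^k:ℕ):ℝ) * r^2) := by ring
        _ = 2 * L^2 * Real.exp (2*L) * r := by rw [e2, e1]
    calc ((2^k:ℕ):ℝ) * Real.exp L * ‖u - v‖
        ≤ ((2^k:ℕ):ℝ) * Real.exp L * (2 * (r*L)^2 * Real.exp (r * L)) := by
          exact mul_le_mul_of_nonneg_left huv (by positivity)
      _ ≤ 2 * L^2 * Real.exp (2*L) * r := hfin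
  have hlim : Filter.Tendsto (fun k : ℕ => (2 * L^2 * Real.exp (2*L)) * ((2:ℝ)^k)⁻¹)
      Filter.atTop (nhds 0) := by
    rw [show (0:ℝ) = (2 * L^2 * Real.exp (2*L)) * 0 by ring]
    exact ((tendsto_pow_atTop_atTop_of_one_lt one_lt_two).inv_tendsto_atTop).const_mul _
  have h := squeeze_zero_norm hbound hlim
  exact tendsto_sub_nhds_zero_iff.mp h


end Banach3


namespace GT
variable {n : ℕ}

lemma trace_trotter [Nonempty (Fin n)] (A B : Matrix (Fin n) (Fin n) ℂ) :
    Filter.Tendsto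
      (fun k : ℕ => ((exp ((((2:ℂ)^k)⁻¹) • A) * exp ((((2:ℂ)^k)⁻¹) • B))^(2^k)).trace)
      Filter.atTop (nhds ((exp (A + B)).trace)) := by
  letI : SeminormedRing (Matrix (Fin n) (Fin n) ℂ) := Matrix.linftyOpSemiNormedRing
  letI : NormedRing (Matrix (Fin n) (Fin n) ℂ) := Matrix.linftyOpNormedRing
  letI : NormedAlgebra ℂ (Matrix (Fin n) (Fin n) ℂ) := Matrix.linftyOpNormedAlgebra
  have h := trotter A B
  have hc : Continuous (Matrix.traceLinearMap (Fin n) ℂ ℂ) :=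
    LinearMap.continuous_of_finiteDimensional _
  exact ((hc.tendsto _).comp h)

lemma herm_smul (k : ℕ) (A : Matrix (Fin n) (Fin n) ℂ) (hA : Aᴴ = A) :
    ((((2:ℂ)^k)⁻¹) • A)ᴴ = (((2:ℂ)^k)⁻¹) • A := by
  rw [Matrix.conjTranspose_smul, hA]
  congr 1
  simp

lemma exp_herm (H : Matrix (Fin n) (Fin n) ℂ) (hH : Hᴴ = H) :
    (exp H)ᴴ = exp H :=
  Matrix.IsHermitian.exp hH

lemma exp_double (c d : ℂ) (H : Matrix (Fin n) (Fin n) ℂ) (h : c + c = d) :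
    exp (c • H) * exp (c • H) = exp (d • H) := by
  rw [← Matrix.exp_add_of_commute (c • H) (c • H) (Commute.refl _), ← add_smul, h]

lemma csum (k : ℕ) : ((2:ℂ)^(k+1))⁻¹ + ((2:ℂ)^(k+1))⁻¹ = ((2:ℂ)^k)⁻¹ := by
  rw [pow_succ]
  field_simp
  ring

lemma gram_step (k : ℕ) (A : Matrix (Fin n) (Fin n) ℂ) (hA : Aᴴ = A) :
    (exp ((((2:ℂ)^(k+1))⁻¹) • A)) * (exp ((((2:ℂ)^(k+1))⁻¹) • A))ᴴ
      = exp ((((2:ℂ)^k)⁻¹) • A) := by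
  rw [exp_herm _ (herm_smul (k+1) A hA), exp_double _ _ _ (csum k)]

lemma exp_pow (k : ℕ) (A : Matrix (Fin n) (Fin n) ℂ) :
    (exp ((((2:ℂ)^k)⁻¹) • A))^(2^k) = exp A := by
  rw [← Matrix.exp_nsmul, ← Nat.cast_smul_eq_nsmul ℂ, smul_smul]
  congr 1
  push_cast
  rw [mul_inv_cancel₀ (pow_ne_zero k two_ne_zero), one_smul]

end GT

namespace GT
variable {n : ℕ}

lemma trace_gram_gram (N R : Matrix (Fin n) (Fin n) ℂ) :
    ((N*Nᴴ) * (R*Rᴴ)).trace = ((S (Rᴴ*N) : ℝ) : ℂ) := by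
  have h1 : ((N*Nᴴ) * (R*Rᴴ)).trace = ((Rᴴ*N) * (Rᴴ*N)ᴴ).trace := by
    rw [Matrix.conjTranspose_mul, Matrix.conjTranspose_conjTranspose]
    rw [show (N*Nᴴ) * (R*Rᴴ) = (N*Nᴴ*R)*Rᴴ by noncomm_ring,
      Matrix.trace_mul_comm]
    congr 1
    noncomm_ring
  rw [h1, trace_mul_conjTranspose]

lemma trace_im_of_herm (M : Matrix (Fin n) (Fin n) ℂ) (hM : Mᴴ = M) : (M.trace).im = 0 := by
  have h1 := Matrix.trace_conjTranspose M
  rw [hM] at h1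
  exact Complex.conj_eq_iff_im.mp h1.symm

end GT

/-- (Golden–Thompson inequality.) For `n×n` Hermitian matrices `A, B`,
`Tr(e^{A+B}) ≤ Tr(e^A e^B)`. -/
theorem stmt16 (n : ℕ) (hn : 1 ≤ n) (A B : Matrix (Fin n) (Fin n) ℂ)
    (hA : A.IsHermitian) (hB : B.IsHermitian) :
    (NormedSpace.exp (A + B)).trace ≤
      (NormedSpace.exp A * NormedSpace.exp B).trace := by
  haveI : Nonempty (Fin n) := Fin.pos_iff_nonempty.mp hn
  have hA' : Aᴴ = A := hA
  have hB' : Bᴴ = B := hB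
  have h_ineq : ∀ k : ℕ,
      (((exp ((((2:ℂ)^k)⁻¹) • A) * exp ((((2:ℂ)^k)⁻¹) • B))^(2^k)).trace).re
        ≤ ((exp A * exp B).trace).re := by
    intro k
    have hk := (GT.key (n := n) k).1 (exp ((((2:ℂ)^(k+1))⁻¹) • A))
      (exp ((((2:ℂ)^(k+1))⁻¹) • B))
    rw [GT.gram_step k A hA', GT.gram_step k B hB', GT.exp_pow k A, GT.exp_pow k B] at hk
    exact (Complex.re_le_norm _).trans hk
  have h_t := GT.trace_trotter A B
  have h_re : Tendsto
      (fun k : ℕ => (((exp ((((2:ℂ)^k)⁻¹) • A) * exp ((((2:ℂ)^k)⁻¹) • B))^(2^k)).trace).re)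
      atTop (nhds (((exp (A + B)).trace).re)) :=
    (Complex.continuous_re.tendsto _).comp h_t
  have h_main : ((exp (A + B)).trace).re ≤ ((exp A * exp B).trace).re :=
    le_of_tendsto h_re (Filter.Eventually.of_forall h_ineq)
  have h_imT : ((exp (A + B)).trace).im = 0 := by
    have hherm : (A+B)ᴴ = A+B := by rw [Matrix.conjTranspose_add, hA', hB']
    exact GT.trace_im_of_herm _ (GT.exp_herm _ hherm)
  have h_imR : ((exp A * exp B).trace).im = 0 := by
    have e1 : exp A = (exp ((((2:ℂ)^(0+1))⁻¹) • A)) * (exp ((((2:ℂ)^(0+1))⁻¹) • A))ᴴ := by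
      rw [GT.gram_step 0 A hA', pow_zero, inv_one, one_smul]
    have e2 : exp B = (exp ((((2:ℂ)^(0+1))⁻¹) • B)) * (exp ((((2:ℂ)^(0+1))⁻¹) • B))ᴴ := by
      rw [GT.gram_step 0 B hB', pow_zero, inv_one, one_smul]
    rw [e1, e2, GT.trace_gram_gram]
    simp
  exact Complex.le_def.mpr ⟨h_main, by rw [h_imT, h_imR]⟩
end

section
/- Let n ≥ 1, let ρ be an n×n positive definite Hermitian complex matrix with Tr ρ = 1, and let B be an n×n Hermitian complex matrix. Then exp(Tr(ρB)) ≤ Tr(exp(log ρ + B)) ≤ exp(‖B‖), where log ρ is the matrix logarithm defined by functional calculus on positive definite Hermitian matrices and ‖B‖ is the operator norm of B. -/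
open scoped ComplexOrder
open Finset



lemma stmt17_qpos {ι : Type*} [Fintype ι] (p : ι → ℝ) (c : ι → ι → ℝ)
    (hp : ∀ j, 0 < p j) (hc : ∀ i j, 0 ≤ c i j) (hrow : ∀ i, ∑ j, c i j = 1) (i : ι) :
    0 < ∑ j, c i j * p j := by
  by_contra h
  push_neg at h
  have hz : ∀ j ∈ univ, c i j * p j = 0 := by
    intro j _
    have h1 : ∀ j ∈ (univ : Finset ι), 0 ≤ c i j * p j :=
      fun j _ => mul_nonneg (hc i j) (hp j).le
    exact ((Finset.sum_eq_zero_iff_of_nonneg h1).mp (le_antisymm h (Finset.sum_nonneg h1))) j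
      (mem_univ j)
  have : ∀ j, c i j = 0 := by
    intro j
    have := hz j (mem_univ j)
    rcases mul_eq_zero.mp this with h' | h'
    · exact h'
    · exact absurd h' (hp j).ne'
  have h1 := hrow i
  rw [Finset.sum_eq_zero (fun j _ => this j)] at h1
  exact one_ne_zero h1.symm

lemma stmt17_lower {ι : Type*} [Fintype ι] (p μ : ι → ℝ) (c : ι → ι → ℝ)
    (hp : ∀ j, 0 < p j) (hpsum : ∑ j, p j = 1)
    (hc : ∀ i j, 0 ≤ c i j) (hrow : ∀ i, ∑ j, c i j = 1) (hcol : ∀ j, ∑ i, c i j = 1) :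
    Real.exp ((∑ i, (∑ j, c i j * p j) * μ i) - ∑ j, p j * Real.log (p j)) ≤
      ∑ i, Real.exp (μ i) := by
  set q : ι → ℝ := fun i => ∑ j, c i j * p j with hq
  have hqpos : ∀ i, 0 < q i := stmt17_qpos p c hp hc hrow
  have hqsum : ∑ i, q i = 1 := by
    rw [hq]
    simp only
    rw [Finset.sum_comm]
    calc ∑ j, ∑ i, c i j * p j = ∑ j, (∑ i, c i j) * p j := by
          simp [Finset.sum_mul]
      _ = 1 := by simp only [hcol, one_mul, hpsum]
  -- Jensen: ∑ q log q ≤ ∑ p log p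
  have jensen : ∑ i, q i * Real.log (q i) ≤ ∑ j, p j * Real.log (p j) := by
    have h1 : ∀ i, q i * Real.log (q i) ≤ ∑ j, c i j * (p j * Real.log (p j)) := by
      intro i
      have := Real.convexOn_mul_log.map_sum_le (t := univ) (w := c i) (p := p)
        (fun j _ => hc i j) (hrow i) (fun j _ => (hp j).le)
      simpa [smul_eq_mul, hq] using this
    calc ∑ i, q i * Real.log (q i) ≤ ∑ i, ∑ j, c i j * (p j * Real.log (p j)) :=
          Finset.sum_le_sum fun i _ => h1 i
      _ = ∑ j, (∑ i, c i j) * (p j * Real.log (p j)) := by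
          rw [Finset.sum_comm]; simp [Finset.sum_mul]
      _ = ∑ j, p j * Real.log (p j) := by simp only [hcol, one_mul]
  have step : Real.exp ((∑ i, q i * μ i) - ∑ i, q i * Real.log (q i)) ≤ ∑ i, Real.exp (μ i) := by
    have key : Real.exp ((∑ i, q i * μ i) - ∑ i, q i * Real.log (q i)) =
        ∏ i, (Real.exp (μ i) / q i) ^ (q i) := by
      rw [← Finset.sum_sub_distrib]
      rw [Real.exp_sum]
      refine Finset.prod_congr rfl fun i _ => ?_
      rw [Real.rpow_def_of_pos (div_pos (Real.exp_pos _) (hqpos i)),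
        Real.log_div (Real.exp_pos _).ne' (hqpos i).ne', Real.log_exp]
      ring_nf
    rw [key]
    calc ∏ i, (Real.exp (μ i) / q i) ^ (q i)
        ≤ ∑ i, q i * (Real.exp (μ i) / q i) :=
          Real.geom_mean_le_arith_mean_weighted univ q _ (fun i _ => (hqpos i).le) hqsum
            (fun i _ => (div_pos (Real.exp_pos _) (hqpos i)).le)
      _ = ∑ i, Real.exp (μ i) := by
          refine Finset.sum_congr rfl fun i _ => ?_
          rw [mul_div_assoc', mul_comm, mul_div_assoc, div_self (hqpos i).ne', mul_one]
    
  refine le_trans (Real.exp_le_exp.mpr ?_) step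
  exact sub_le_sub_left jensen _

lemma stmt17_upper {ι : Type*} [Fintype ι] (p μ : ι → ℝ) (c : ι → ι → ℝ) (K : ℝ)
    (hp : ∀ j, 0 < p j) (hpsum : ∑ j, p j = 1)
    (hc : ∀ i j, 0 ≤ c i j) (hrow : ∀ i, ∑ j, c i j = 1) (hcol : ∀ j, ∑ i, c i j = 1)
    (hμ : ∀ i, μ i ≤ (∑ j, c i j * Real.log (p j)) + K) :
    ∑ i, Real.exp (μ i) ≤ Real.exp K := by
  have h1 : ∀ i, Real.exp (μ i) ≤ (∑ j, c i j * p j) * Real.exp K := by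
    intro i
    calc Real.exp (μ i) ≤ Real.exp ((∑ j, c i j * Real.log (p j)) + K) :=
          Real.exp_le_exp.mpr (hμ i)
      _ = Real.exp (∑ j, c i j * Real.log (p j)) * Real.exp K := Real.exp_add _ _
      _ ≤ (∑ j, c i j * p j) * Real.exp K := by
          refine mul_le_mul_of_nonneg_right ?_ (Real.exp_pos _).le
          have : Real.exp (∑ j, c i j * Real.log (p j)) = ∏ j, (p j) ^ (c i j) := by
            rw [Real.exp_sum]
            refine Finset.prod_congr rfl fun j _ => ?_
            rw [Real.rpow_def_of_pos (hp j)]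
            ring_nf
          rw [this]
          exact Real.geom_mean_le_arith_mean_weighted univ (c i) p (fun j _ => hc i j)
            (hrow i) (fun j _ => (hp j).le)
  calc ∑ i, Real.exp (μ i) ≤ ∑ i, (∑ j, c i j * p j) * Real.exp K :=
        Finset.sum_le_sum fun i _ => h1 i
    _ = Real.exp K := by
        rw [← Finset.sum_mul]
        rw [Finset.sum_comm]
        have : ∑ j, ∑ i, c i j * p j = 1 := by
          calc ∑ j, ∑ i, c i j * p j = ∑ j, (∑ i, c i j) * p j := by simp [Finset.sum_mul]
            _ = 1 := by simp only [hcol, one_mul, hpsum]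
        rw [this, one_mul]


lemma stmt17_colsum {ι : Type*} [Fintype ι] [DecidableEq ι] (W : Matrix ι ι ℂ)
    (h : star W * W = 1) (i : ι) : ∑ j, ‖W j i‖ ^ 2 = 1 := by
  have h2 : (star W * W) i i = 1 := by rw [h, Matrix.one_apply_eq]
  rw [Matrix.mul_apply] at h2
  have h3 : ∀ j, (star W) i j * W j i = ((‖W j i‖ ^ 2 : ℝ) : ℂ) := by
    intro j
    rw [Matrix.star_apply]
    simpa using RCLike.conj_mul (W j i)
  rw [Finset.sum_congr rfl fun j _ => h3 j] at h2
  exact_mod_cast h2.trans rfl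

lemma stmt17_diag {ι : Type*} [Fintype ι] [DecidableEq ι] (W : Matrix ι ι ℂ) (d : ι → ℝ)
    (i : ι) :
    (star W * Matrix.diagonal (fun j => (d j : ℂ)) * W) i i
      = ((∑ j, d j * ‖W j i‖ ^ 2 : ℝ) : ℂ) := by
  rw [Matrix.mul_assoc, Matrix.mul_apply]
  have key : ∀ j, (star W) i j * ((Matrix.diagonal (fun j => (d j : ℂ)) * W) j i)
      = ((d j * ‖W j i‖ ^ 2 : ℝ) : ℂ) := by
    intro j
    have hnsq : Complex.normSq (W j i) = ‖W j i‖ ^ 2 := by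
      rw [Complex.normSq_eq_norm_sq]
    rw [Matrix.diagonal_mul, Matrix.star_apply,
      show (star (W j i) : ℂ) = (starRingEnd ℂ) (W j i) from rfl, mul_left_comm,
      mul_comm ((starRingEnd ℂ) (W j i)) (W j i), Complex.mul_conj, hnsq,
      ← Complex.ofReal_mul]
  rw [Finset.sum_congr rfl fun j _ => key j]
  push_cast
  rfl

lemma stmt17_trace_mul_diag {ι : Type*} [Fintype ι] [DecidableEq ι] (M : Matrix ι ι ℂ)
    (v : ι → ℂ) : (M * Matrix.diagonal v).trace = ∑ i, M i i * v i := by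
  simp [Matrix.trace, Matrix.diag, Matrix.mul_diagonal]

lemma stmt17_bound {ι : Type*} [Fintype ι] [DecidableEq ι] (B : Matrix ι ι ℂ) (v : ι → ℂ)
    (hv : ∑ k, ‖v k‖ ^ 2 = 1) :
    ‖∑ k, (starRingEnd ℂ) (v k) * (B.mulVec v) k‖ ≤ ‖Matrix.toEuclideanCLM (𝕜 := ℂ) B‖ := by
  set x : EuclideanSpace ℂ ι := (WithLp.equiv 2 (ι → ℂ)).symm v with hx
  have hxnorm : ‖x‖ = 1 := by
    rw [EuclideanSpace.norm_eq]
    have : ∀ k, ‖x k‖ = ‖v k‖ := fun k => rfl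
    simp only [this, hv, Real.sqrt_one]
  have happ : (Matrix.toEuclideanCLM (𝕜 := ℂ) B) x = (WithLp.equiv 2 (ι → ℂ)).symm (B.mulVec v) := by
    rfl
  have hinner : (inner ℂ x ((Matrix.toEuclideanCLM (𝕜 := ℂ) B) x) : ℂ)
      = ∑ k, (starRingEnd ℂ) (v k) * (B.mulVec v) k := by
    rw [happ, PiLp.inner_apply]
    simp only [RCLike.inner_apply']
    rfl
  calc ‖∑ k, (starRingEnd ℂ) (v k) * (B.mulVec v) k‖
      = ‖(inner ℂ x ((Matrix.toEuclideanCLM (𝕜 := ℂ) B) x) : ℂ)‖ := by rw [hinner]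
    _ ≤ ‖x‖ * ‖(Matrix.toEuclideanCLM (𝕜 := ℂ) B) x‖ := norm_inner_le_norm _ _
    _ ≤ ‖x‖ * (‖Matrix.toEuclideanCLM (𝕜 := ℂ) B‖ * ‖x‖) := by
        exact mul_le_mul_of_nonneg_left (ContinuousLinearMap.le_opNorm _ _) (norm_nonneg _)
    _ = ‖Matrix.toEuclideanCLM (𝕜 := ℂ) B‖ := by rw [hxnorm]; ring


/-- For a positive definite density matrix `ρ` (trace one) and a Hermitian
matrix `B`, `exp(Tr(ρB)) ≤ Tr(exp(log ρ + B)) ≤ exp(‖B‖)`, where `log ρ` is the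
functional-calculus matrix logarithm and `‖B‖` is the (ℓ²-)operator norm of `B`. -/
theorem stmt17 (n : ℕ) (hn : 1 ≤ n) (ρ B : Matrix (Fin n) (Fin n) ℂ)
    (hρ : ρ.PosDef) (hρtr : ρ.trace = 1) (hB : B.IsHermitian) :
    Complex.exp ((ρ * B).trace) ≤
        (NormedSpace.exp (hρ.1.cfc Real.log + B)).trace ∧
      (NormedSpace.exp (hρ.1.cfc Real.log + B)).trace ≤
        Complex.exp ((‖Matrix.toEuclideanCLM (𝕜 := ℂ) B‖ : ℂ)) := by
  classical
  set L : Matrix (Fin n) (Fin n) ℂ := hρ.1.cfc Real.log with hLdef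
  have hL : L.IsHermitian := by
    rw [hLdef, ← hρ.1.cfc_eq Real.log]
    exact cfc_predicate Real.log ρ
  have hH : (L + B).IsHermitian := hL.add hB
  set U : Matrix (Fin n) (Fin n) ℂ := (hρ.1.eigenvectorUnitary : Matrix (Fin n) (Fin n) ℂ)
    with hUdef
  set V : Matrix (Fin n) (Fin n) ℂ := (hH.eigenvectorUnitary : Matrix (Fin n) (Fin n) ℂ)
    with hVdef
  set p : Fin n → ℝ := hρ.1.eigenvalues with hpdef
  set μ : Fin n → ℝ := hH.eigenvalues with hmudef
  have hUU : star U * U = 1 := Matrix.mem_unitaryGroup_iff'.mp (hρ.1.eigenvectorUnitary).2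
  have hUU' : U * star U = 1 := Matrix.mem_unitaryGroup_iff.mp (hρ.1.eigenvectorUnitary).2
  have hVV : star V * V = 1 := Matrix.mem_unitaryGroup_iff'.mp (hH.eigenvectorUnitary).2
  have hVV' : V * star V = 1 := Matrix.mem_unitaryGroup_iff.mp (hH.eigenvectorUnitary).2
  set W : Matrix (Fin n) (Fin n) ℂ := star U * V with hWdef
  have hsW : star W = star V * U := by rw [hWdef, star_mul, star_star]
  have hWW : star W * W = 1 := by
    rw [hsW, hWdef, Matrix.mul_assoc, ← Matrix.mul_assoc U (star U) V, hUU', Matrix.one_mul, hVV]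
  have hWW' : W * star W = 1 := by
    rw [hsW, hWdef, Matrix.mul_assoc, ← Matrix.mul_assoc V (star V) U, hVV', Matrix.one_mul, hUU]
  set c : Fin n → Fin n → ℝ := fun i j => ‖W j i‖ ^ 2 with hcdef
  have hc : ∀ i j, 0 ≤ c i j := fun i j => by positivity
  have hrow : ∀ i, ∑ j, c i j = 1 := fun i => stmt17_colsum W hWW i
  have hcol : ∀ j, ∑ i, c i j = 1 := by
    intro j
    have h := stmt17_colsum (star W) (by rw [star_star, hWW']) j
    simpa [Matrix.star_apply] using h
  have hppos : ∀ j, 0 < p j := fun j => hρ.eigenvalues_pos j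
  set Dp : Matrix (Fin n) (Fin n) ℂ := Matrix.diagonal (fun j => (p j : ℂ)) with hDp
  set Dlog : Matrix (Fin n) (Fin n) ℂ := Matrix.diagonal (fun j => (Real.log (p j) : ℂ))
    with hDlog
  set Dmu : Matrix (Fin n) (Fin n) ℂ := Matrix.diagonal (fun i => (μ i : ℂ)) with hDmu
  have hρS : ρ = U * Dp * star U := by
    have h := hρ.1.spectral_theorem; rw [Unitary.conjStarAlgAut_apply] at h; exact h
  have hLS : L = U * Dlog * star U := rfl
  have hHdiag : star V * (L + B) * V = Dmu := by
    have h := hH.conjStarAlgAut_star_eigenvectorUnitary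
    rw [Unitary.conjStarAlgAut_apply, Unitary.coe_star, star_star] at h; exact h
  have hρc : star V * ρ * V = star W * Dp * W := by
    rw [hρS, hsW, hWdef]
    simp only [Matrix.mul_assoc]
  have hLc : star V * L * V = star W * Dlog * W := by
    rw [hLS, hsW, hWdef]
    simp only [Matrix.mul_assoc]
  have hq : ∀ i, (star V * ρ * V) i i = ((∑ j, p j * c i j : ℝ) : ℂ) := fun i => by
    rw [hρc]; exact stmt17_diag W p i
  have hlog : ∀ i, (star V * L * V) i i = ((∑ j, Real.log (p j) * c i j : ℝ) : ℂ) := fun i => by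
    rw [hLc]; exact stmt17_diag W (fun j => Real.log (p j)) i
  have hμdiag : ∀ i, (star V * (L + B) * V) i i = ((μ i : ℝ) : ℂ) := fun i => by
    rw [hHdiag, hDmu, Matrix.diagonal_apply_eq]
  set b : Fin n → ℝ := fun i => μ i - ∑ j, Real.log (p j) * c i j with hbdef
  have hBdiag : ∀ i, (star V * B * V) i i = ((b i : ℝ) : ℂ) := by
    intro i
    have hsplit : star V * (L + B) * V = star V * L * V + star V * B * V := by
      rw [Matrix.mul_add, Matrix.add_mul]
    have h2 := congrArg (fun M : Matrix (Fin n) (Fin n) ℂ => M i i) hsplit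
    simp only [Matrix.add_apply] at h2
    rw [hμdiag i, hlog i] at h2
    have h4 : ((b i : ℝ) : ℂ) = ((μ i : ℝ) : ℂ) - ((∑ j, Real.log (p j) * c i j : ℝ) : ℂ) := by
      rw [hbdef]; push_cast; ring
    rw [h4]
    linear_combination -h2
  set K : ℝ := ‖Matrix.toEuclideanCLM (𝕜 := ℂ) B‖ with hK
  have hbK : ∀ i, |b i| ≤ K := by
    intro i
    have h1 : ∑ k, ‖V k i‖ ^ 2 = 1 := stmt17_colsum V hVV i
    have h2 : (star V * B * V) i i
        = ∑ k, (starRingEnd ℂ) (V k i) * (B.mulVec (fun l => V l i)) k := by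
      rw [Matrix.mul_assoc, Matrix.mul_apply]
      refine Finset.sum_congr rfl fun k _ => ?_
      rw [Matrix.star_apply, Matrix.mul_apply]
      rfl
    have h3 := stmt17_bound B (fun k => V k i) h1
    rw [← h2, hBdiag i] at h3
    rw [Complex.norm_real, Real.norm_eq_abs] at h3
    exact h3
  -- trace of ρ gives ∑ p = 1
  have htconj : ∀ X : Matrix (Fin n) (Fin n) ℂ, (star V * X * V).trace = X.trace := by
    intro X
    rw [Matrix.trace_mul_cycle, hVV', Matrix.one_mul]
  have htr : ρ.trace = ((∑ j, p j : ℝ) : ℂ) := by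
    rw [hρS, Matrix.trace_mul_cycle, hUU, Matrix.one_mul, hDp, Matrix.trace_diagonal]
    push_cast
    rfl
  have hpsum : ∑ j, p j = 1 := by
    have h := hρtr
    rw [htr] at h
    exact_mod_cast h
  -- trace of ρ * L
  have hρL : (ρ * L).trace = ((∑ j, p j * Real.log (p j) : ℝ) : ℂ) := by
    have h1 : ρ * L = U * (Dp * Dlog) * star U := by
      rw [hρS, hLS]
      calc (U * Dp * star U) * (U * Dlog * star U)
          = U * (Dp * ((star U * U) * (Dlog * star U))) := by simp only [Matrix.mul_assoc]
        _ = U * (Dp * Dlog) * star U := by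
            rw [hUU, Matrix.one_mul]; simp only [Matrix.mul_assoc]
    rw [h1, Matrix.trace_mul_cycle, hUU, Matrix.one_mul, hDp, hDlog,
      Matrix.diagonal_mul_diagonal, Matrix.trace_diagonal]
    push_cast
    rfl
  -- trace of ρ * (L + B)
  have hρH : (ρ * (L + B)).trace = ((∑ i, (∑ j, p j * c i j) * μ i : ℝ) : ℂ) := by
    have h1 : (star V * ρ * V) * (star V * (L + B) * V) = star V * (ρ * (L + B)) * V := by
      calc (star V * ρ * V) * (star V * (L + B) * V)
          = star V * (ρ * ((V * star V) * ((L + B) * V))) := by simp only [Matrix.mul_assoc]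
        _ = star V * (ρ * ((L + B) * V)) := by rw [hVV', Matrix.one_mul]
        _ = star V * (ρ * (L + B)) * V := by simp only [Matrix.mul_assoc]
    have h2 : (ρ * (L + B)).trace = ((star V * ρ * V) * Dmu).trace := by
      rw [← htconj (ρ * (L + B)), ← h1, hHdiag]
    rw [h2, hDmu, stmt17_trace_mul_diag]
    push_cast
    refine Finset.sum_congr rfl fun i _ => ?_
    rw [hq i]
    push_cast
    rfl
  -- trace of ρ * B
  have hρB : (ρ * B).trace
      = (((∑ i, (∑ j, p j * c i j) * μ i) - ∑ j, p j * Real.log (p j) : ℝ) : ℂ) := by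
    have h2 : (ρ * B).trace = (ρ * (L + B)).trace - (ρ * L).trace := by
      rw [Matrix.mul_add, Matrix.trace_add]; ring
    rw [h2, hρH, hρL, ← Complex.ofReal_sub]
  -- trace of exp (L + B)
  have hVinv : V⁻¹ = star V := Matrix.inv_eq_left_inv hVV
  have hexp : (NormedSpace.exp (L + B)).trace = ((∑ i, Real.exp (μ i) : ℝ) : ℂ) := by
    have hHS : L + B = V * Dmu * V⁻¹ := by rw [hVinv]; have h := hH.spectral_theorem; rw [Unitary.conjStarAlgAut_apply] at h; exact h
    rw [hHS, Matrix.exp_conj V Dmu (⟨⟨V, star V, hVV', hVV⟩, rfl⟩), hVinv, hDmu,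
      Matrix.exp_diagonal, Matrix.trace_mul_cycle, hVV, Matrix.one_mul, Matrix.trace_diagonal]
    push_cast
    refine Finset.sum_congr rfl fun i _ => ?_
    rw [Pi.coe_exp, ← Complex.exp_eq_exp_ℂ, ← Complex.ofReal_exp]
  have hconv : ∀ i, (∑ j, p j * c i j) = ∑ j, c i j * p j :=
    fun i => Finset.sum_congr rfl fun j _ => mul_comm _ _
  constructor
  · rw [hρB, hexp, ← Complex.ofReal_exp, Complex.real_le_real]
    simp only [hconv]
    exact stmt17_lower p μ c hppos hpsum hc hrow hcol
  · rw [hexp, ← Complex.ofReal_exp, Complex.real_le_real]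
    refine stmt17_upper p μ c K hppos hpsum hc hrow hcol ?_
    intro i
    have h1 : b i ≤ K := (le_abs_self _).trans (hbK i)
    have h2 : μ i = (∑ j, Real.log (p j) * c i j) + b i := by rw [hbdef]; ring
    rw [h2]
    have h3 : (∑ j, Real.log (p j) * c i j) = ∑ j, c i j * Real.log (p j) :=
      Finset.sum_congr rfl fun j _ => mul_comm _ _
    rw [h3]
    exact add_le_add_right h1 _
end
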